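/- Let G be a finite group in which every subgroup is normal (a Dedekind group) and A a finite set of size q ≥ 2. Let M be the monoid, under composition, of all G-equivariant transformations of A^G, and let U ⊆ M be its group of units (the bijective G-equivariant transformations). Let E be the number of pairs (H,K) of subgroups of G with H ≤ K, and let I₂ be the number of subgroups of G of index 2. Then the relative rank of U in M — the least cardinality of a finite set V ⊆ M such that U ∪ V generates M as a monoid — equals E − I₂ if q = 2, and equals E if q ≥ 3. -/

import Mathlib

variable {G A : Type*}

/-- The right shift action of `G` on configurations `A^G`: `(x · g) h = x (h * g⁻¹)`. -/
def shift [Group G] (x : G → A) (g : G) : G → A := fun h => x (h * g⁻¹)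

/-- A transformation of the configuration space is `G`-equivariant if it commutes
with the shift action. -/
def equivariant [Group G] (τ : (G → A) → (G → A)) : Prop :=
  ∀ (x : G → A) (g : G), τ (shift x g) = shift (τ x) g

/-- The `G`-orbit of a configuration. -/
def orbit [Group G] (x : G → A) : Set (G → A) := Set.range (shift x)

/-- The stabilizer of a configuration, as a subgroup of `G`. -/
def stab [Group G] (x : G → A) : Subgroup G where
  carrier := {g : G | shift x g = x}
  one_mem' := by
    show shift x 1 = x
    funext h
    simp [shift]
  mul_mem' := by
    intro a b ha hb
    have ha' : shift x a = x := ha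
    have hb' : shift x b = x := hb
    show shift x (a * b) = x
    funext h
    show x (h * (a * b)⁻¹) = x h
    have key : h * (a * b)⁻¹ = h * b⁻¹ * a⁻¹ := by group
    rw [key]
    have h1 := congrFun ha' (h * b⁻¹)
    have h2 := congrFun hb' h
    simp only [shift] at h1 h2
    rw [h1, h2]
  inv_mem' := by
    intro a ha
    have ha' : shift x a = x := ha
    show shift x a⁻¹ = x
    funext h
    show x (h * a⁻¹⁻¹) = x h
    rw [inv_inv]
    have h1 := congrFun ha' (h * a)
    simp only [shift] at h1
    rw [mul_inv_cancel_right] at h1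
    exact h1.symm

/-- Two subgroups `H`, `K` of `G` are conjugate, namely `K = g⁻¹ * H * g` for some `g ∈ G`. -/
def conjSub [Group G] (H K : Subgroup G) : Prop :=
  ∃ g : G, ∀ a : G, a ∈ K ↔ g * a * g⁻¹ ∈ H

namespace CAAux

open Function

variable [Group G]

theorem shift_shift (x : G → A) (g s : G) : shift (shift x g) s = shift x (g * s) := by
  funext h; simp [shift, mul_assoc]

theorem shift_one (x : G → A) : shift x 1 = x := by funext h; simp [shift]

theorem mem_stab {x : G → A} {g : G} : g ∈ stab x ↔ shift x g = x := Iff.rfl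

theorem shift_eq_shift_iff {x : G → A} {a b : G} :
    shift x a = shift x b ↔ a * b⁻¹ ∈ stab x := by
  constructor
  · intro h
    have := congrArg (fun y => shift y b⁻¹) h
    simpa [shift_shift, shift_one, mem_stab] using this
  · intro h
    have h' : shift x (a * b⁻¹) = x := h
    calc shift x a = shift x (a * b⁻¹ * b) := by group
    _ = shift (shift x (a * b⁻¹)) b := (shift_shift ..).symm
    _ = shift x b := by rw [h']

theorem shift_congr {r r' : G → A} (h : stab r ≤ stab r') {a b : G}
    (hab : shift r a = shift r b) : shift r' a = shift r' b := by
  rw [shift_eq_shift_iff] at hab ⊢; exact h hab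

/-- the orbit equivalence relation -/
def orbSetoid (G A : Type*) [Group G] : Setoid (G → A) where
  r x y := ∃ g, shift x g = y
  iseqv := by
    refine ⟨fun x => ⟨1, shift_one x⟩, ?_, ?_⟩
    · rintro x y ⟨g, rfl⟩; exact ⟨g⁻¹, by rw [shift_shift, mul_inv_cancel, shift_one]⟩
    · rintro x y z ⟨g, rfl⟩ ⟨g', rfl⟩; exact ⟨g * g', (shift_shift ..).symm⟩

variable (G A) in
/-- the set of orbits -/
def Orbs [Group G] := Quotient (orbSetoid G A)

variable {x y : G → A}

def mkO (x : G → A) : Orbs G A := Quotient.mk (orbSetoid G A) x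

theorem mkO_eq_mkO : mkO x = mkO y ↔ ∃ g, shift x g = y := by
  unfold mkO
  refine Quotient.eq.trans ?_
  rfl

theorem mkO_shift (x : G → A) (g : G) : mkO (shift x g) = mkO x :=
  (mkO_eq_mkO.2 ⟨g⁻¹, by rw [shift_shift, mul_inv_cancel, shift_one]⟩)

noncomputable def repO (ω : Orbs G A) : G → A := Quotient.out ω

theorem mkO_repO (ω : Orbs G A) : mkO (repO ω) = ω := Quotient.out_eq ω

theorem exists_shift_repO (x : G → A) : ∃ g, shift (repO (mkO x)) g = x :=
  Quotient.exact (Quotient.out_eq (mkO x))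

/-- the stabilizer type of an orbit -/
noncomputable def typeOf (ω : Orbs G A) : Subgroup G := stab (repO ω)

theorem stab_shift (hded : ∀ H : Subgroup G, H.Normal) (x : G → A) (g : G) :
    stab (shift x g) = stab x := by
  ext s
  have : shift (shift x g) s = shift x g ↔ (g * s) * g⁻¹ ∈ stab x := by
    rw [shift_shift, shift_eq_shift_iff]
  rw [mem_stab, this]
  constructor
  · intro h
    have := (hded (stab x)).conj_mem _ h g⁻¹
    simpa [mul_assoc] using this
  · intro h
    exact (hded (stab x)).conj_mem s h g

theorem typeOf_mkO (hded : ∀ H : Subgroup G, H.Normal) (x : G → A) :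
    typeOf (mkO x) = stab x := by
  obtain ⟨g, hg⟩ := exists_shift_repO x
  rw [typeOf]
  conv_rhs => rw [← hg]
  rw [stab_shift hded]

end CAAux
namespace CAAux

variable [Group G]
variable {σ τ : (G → A) → (G → A)}

theorem equivariant_id : equivariant (id : (G → A) → (G → A)) := fun _ _ => rfl

theorem equivariant_comp (hσ : equivariant σ) (hτ : equivariant τ) :
    equivariant (σ ∘ τ) := fun x g => by simp [Function.comp, hτ x g, hσ (τ x) g]

theorem stab_le_equivariant (hτ : equivariant τ) (x : G → A) : stab x ≤ stab (τ x) := by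
  intro s hs
  rw [mem_stab] at hs ⊢
  rw [← hτ x s, hs]

/-- the induced map on orbits -/
def Fmap (τ : (G → A) → (G → A)) (hτ : equivariant τ) : Orbs G A → Orbs G A :=
  Quotient.lift (fun x => mkO (τ x)) (by
    rintro x y ⟨g, rfl⟩
    show mkO (τ x) = mkO (τ (shift x g))
    rw [hτ x g, mkO_shift])

theorem Fmap_mkO (hτ : equivariant τ) (x : G → A) : Fmap τ hτ (mkO x) = mkO (τ x) := rfl

theorem Fmap_comp (hσ : equivariant σ) (hτ : equivariant τ) (ω : Orbs G A) :
    Fmap (σ ∘ τ) (equivariant_comp hσ hτ) ω = Fmap σ hσ (Fmap τ hτ ω) := by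
  induction ω using Quotient.ind
  rfl

/-- monotone orbit maps -/
def Mono (F : Orbs G A → Orbs G A) : Prop := ∀ ω, typeOf ω ≤ typeOf (F ω)

theorem Fmap_mono (hded : ∀ H : Subgroup G, H.Normal) (hτ : equivariant τ) :
    Mono (Fmap τ hτ) := by
  intro ω
  induction ω using Quotient.ind with
  | _ x =>
    show typeOf (mkO x) ≤ typeOf (Fmap τ hτ (mkO x))
    rw [Fmap_mkO, typeOf_mkO hded, typeOf_mkO hded]
    exact stab_le_equivariant hτ x

/-- canonical equivariant map associated to an orbit map -/
noncomputable def tauF (F : Orbs G A → Orbs G A) : (G → A) → (G → A) := fun x =>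
  shift (repO (F (mkO x))) (exists_shift_repO x).choose

theorem shift_congr' {F : Orbs G A → Orbs G A} (hF : Mono F) (ω : Orbs G A) {a b : G}
    (hab : shift (repO ω) a = shift (repO ω) b) :
    shift (repO (F ω)) a = shift (repO (F ω)) b :=
  shift_congr (hF ω) hab

theorem tauF_eq_of {F : Orbs G A → Orbs G A} (hF : Mono F) {x : G → A} {c : G}
    (hc : shift (repO (mkO x)) c = x) :
    tauF F x = shift (repO (F (mkO x))) c := by
  unfold tauF
  exact shift_congr' hF (mkO x) ((exists_shift_repO x).choose_spec.trans hc.symm)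

theorem tauF_equivariant {F : Orbs G A → Orbs G A} (hF : Mono F) : equivariant (tauF F) := by
  intro x g
  have hc := (exists_shift_repO x).choose_spec
  set c := (exists_shift_repO x).choose with hcdef
  have hc2 : shift (repO (mkO (shift x g))) (c * g) = shift x g := by
    rw [mkO_shift, ← shift_shift, hc]
  rw [tauF_eq_of hF hc2, tauF_eq_of hF hc, mkO_shift, ← shift_shift]

theorem tauF_repO {F : Orbs G A → Orbs G A} (hF : Mono F) (ω : Orbs G A) :
    tauF F (repO ω) = repO (F ω) := by
  have hc : shift (repO (mkO (repO ω))) (1 : G) = repO ω := by rw [mkO_repO, shift_one]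
  rw [tauF_eq_of hF hc, mkO_repO, shift_one]

theorem equivariant_ext (hσ : equivariant σ) (hτ : equivariant τ)
    (h : ∀ ω : Orbs G A, σ (repO ω) = τ (repO ω)) : σ = τ := by
  funext x
  obtain ⟨g, hg⟩ := exists_shift_repO x
  rw [← hg, hσ _ g, hτ _ g, h (mkO x)]

theorem mono_id : Mono (id : Orbs G A → Orbs G A) := fun _ => le_rfl

theorem mono_comp {F F' : Orbs G A → Orbs G A} (hF : Mono F) (hF' : Mono F') :
    Mono (F ∘ F') := fun ω => (hF' ω).trans (hF (F' ω))

theorem tauF_id : tauF (id : Orbs G A → Orbs G A) = id := by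
  refine equivariant_ext (tauF_equivariant mono_id) equivariant_id (fun ω => ?_)
  rw [tauF_repO mono_id]; rfl

theorem tauF_comp {F F' : Orbs G A → Orbs G A} (hF : Mono F) (hF' : Mono F') :
    tauF (F ∘ F') = tauF F ∘ tauF F' := by
  refine equivariant_ext (tauF_equivariant (mono_comp hF hF'))
    (equivariant_comp (tauF_equivariant hF) (tauF_equivariant hF')) (fun ω => ?_)
  rw [tauF_repO (mono_comp hF hF')]
  show repO (F (F' ω)) = tauF F (tauF F' (repO ω))
  rw [tauF_repO hF', tauF_repO hF]

theorem Fmap_tauF {F : Orbs G A → Orbs G A} (hF : Mono F) :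
    Fmap (tauF F) (tauF_equivariant hF) = F := by
  funext ω
  conv_lhs => rw [← mkO_repO ω]
  rw [Fmap_mkO, tauF_repO hF, mkO_repO]

theorem tauF_bijective {F : Orbs G A → Orbs G A} (hbij : Function.Bijective F)
    (hpres : ∀ ω, typeOf (F ω) = typeOf ω) : Function.Bijective (tauF F) := by
  have hF : Mono F := fun ω => (hpres ω).ge
  let e := Equiv.ofBijective F hbij
  have hF' : Mono (⇑e.symm) := by
    intro ω
    have : typeOf (F (e.symm ω)) = typeOf (e.symm ω) := hpres _
    have h2 : F (e.symm ω) = ω := e.apply_symm_apply ω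
    rw [h2] at this
    exact this.le
  have h1 : tauF F ∘ tauF (⇑e.symm) = id := by
    rw [← tauF_comp hF hF']
    have : F ∘ ⇑e.symm = id := by funext ω; exact e.apply_symm_apply ω
    rw [this, tauF_id]
  have h2 : tauF (⇑e.symm) ∘ tauF F = id := by
    rw [← tauF_comp hF' hF]
    have : ⇑e.symm ∘ F = id := by funext ω; exact e.symm_apply_apply ω
    rw [this, tauF_id]
  exact ⟨Function.LeftInverse.injective (congrFun h2),
    Function.RightInverse.surjective (congrFun h1)⟩

theorem equivariant_inv (hτ : equivariant τ) (hbij : Function.Bijective τ) :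
    equivariant ⇑(Equiv.ofBijective τ hbij).symm := by
  intro y g
  set e := Equiv.ofBijective τ hbij with hedef
  apply hbij.injective
  show e (e.symm (shift y g)) = τ (shift (e.symm y) g)
  rw [e.apply_symm_apply, hτ]
  exact congrArg (fun z => shift z g) (e.apply_symm_apply y).symm

end CAAux
namespace CAAux

open Function Set

attribute [local instance] Classical.propDecidable

variable [Group G]

/-- sector of orbits of stabilizer type `L` -/
def SectS (L : Subgroup G) : Set (Orbs G A) := {ω | typeOf ω = L}

theorem sectS_disj {L L' : Subgroup G} {ω : Orbs G A} (h : ω ∈ SectS L) (h' : ω ∈ SectS L') :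
    L = L' := h.symm.trans h'

/-- composite of a list of maps, head applied last -/
def comps (l : List (Orbs G A → Orbs G A)) : Orbs G A → Orbs G A := l.foldr (· ∘ ·) id

@[simp] theorem comps_nil : comps ([] : List (Orbs G A → Orbs G A)) = id := rfl

@[simp] theorem comps_cons (f : Orbs G A → Orbs G A) (t : List (Orbs G A → Orbs G A)) :
    comps (f :: t) = f ∘ comps t := rfl

theorem mono_comps {l : List (Orbs G A → Orbs G A)} (hl : ∀ f ∈ l, Mono f) :
    Mono (comps l) := by
  induction l with
  | nil => exact mono_id
  | cons f t ih =>
    show Mono (f ∘ comps t)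
    exact mono_comp (hl f (by simp)) (ih (fun g hg => hl g (by simp [hg])))

/-- key type-sandwich: if the final type equals the initial type, intermediate types agree -/
theorem type_sandwich {f Ct : Orbs G A → Orbs G A} (hf : Mono f) (hCt : Mono Ct)
    {L : Subgroup G} {ω : Orbs G A} (hω : ω ∈ SectS L) (h : f (Ct ω) ∈ SectS L) :
    Ct ω ∈ SectS L := by
  refine le_antisymm ?_ ?_
  · have := hf (Ct ω); rw [h] at this; exact this
  · have := hCt ω; rwa [hω] at this

section FinOrb
variable [Fintype G] [Fintype A]

noncomputable instance : Fintype (G → A) := Fintype.ofFinite _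

instance : Finite (Orbs G A) := Quotient.finite _

noncomputable instance : Fintype (Orbs G A) := Fintype.ofFinite _

theorem sectS_finite (L : Subgroup G) : (SectS (A := A) L).Finite := Set.toFinite _

/-- upgrade maps-to + inj-on to bij-on for a sector -/
theorem bijOn_sect {f : Orbs G A → Orbs G A} {L : Subgroup G}
    (hm : MapsTo f (SectS L) (SectS L)) (hi : InjOn f (SectS L)) :
    BijOn f (SectS L) (SectS L) :=
  ((sectS_finite L).injOn_iff_bijOn_of_mapsTo hm).1 hi

theorem bijOn_of_comps {l : List (Orbs G A → Orbs G A)} (hl : ∀ f ∈ l, Mono f)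
    {L : Subgroup G} (hmap : MapsTo (comps l) (SectS L) (SectS L))
    (hinj : InjOn (comps l) (SectS L)) :
    ∀ f ∈ l, BijOn f (SectS L) (SectS L) := by
  induction l with
  | nil => intro f hf; cases hf
  | cons f t ih =>
    have hf : Mono f := hl f (by simp)
    have ht : ∀ g ∈ t, Mono g := fun g hg => hl g (by simp [hg])
    have hCt : Mono (comps t) := mono_comps ht
    have hmapt : MapsTo (comps t) (SectS L) (SectS L) := fun ω hω =>
      type_sandwich hf hCt hω (hmap hω)
    have hinjt : InjOn (comps t) (SectS L) := fun a ha b hb hab =>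
      hinj ha hb (by simp [comps_cons, Function.comp, hab])
    have hbt : BijOn (comps t) (SectS L) (SectS L) := bijOn_sect hmapt hinjt
    intro g hg
    rcases List.mem_cons.1 hg with rfl | hg'
    · -- g = f
      have hmapf : MapsTo g (SectS L) (SectS L) := by
        intro ω' hω'
        obtain ⟨ω, hω, rfl⟩ := hbt.surjOn hω'
        exact hmap hω
      have hinjf : InjOn g (SectS L) := by
        intro a' ha' b' hb' hab
        obtain ⟨a, ha, rfl⟩ := hbt.surjOn ha'
        obtain ⟨b, hb, rfl⟩ := hbt.surjOn hb'
        rw [hinj ha hb hab]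
      exact bijOn_sect hmapf hinjf
    · exact ih ht hmapt hinjt g hg'

/-- property of a factor witnessing a strict jump `(H,K)` -/
def P1 (f : Orbs G A → Orbs G A) (H K : Subgroup G) : Prop :=
  (∀ L, L ≠ H → BijOn f (SectS L) (SectS L)) ∧ InjOn f (SectS H) ∧
  ∃ ω₀ ∈ SectS H, f ω₀ ∈ SectS (A := A) K ∧
    ∀ ω ∈ SectS (A := A) H, ω ≠ ω₀ → f ω ∈ SectS (A := A) H

/-- property of a factor witnessing a same-type collapse at `H` -/
def P2 (f : Orbs G A → Orbs G A) (H : Subgroup G) : Prop :=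
  (∀ L, L ≠ H → BijOn f (SectS L) (SectS L)) ∧ ¬ InjOn f (SectS H)

def PP (f : Orbs G A → Orbs G A) (H K : Subgroup G) : Prop :=
  if H = K then P2 f H else P1 f H K

theorem exists_P1 {l : List (Orbs G A → Orbs G A)} (hl : ∀ f ∈ l, Mono f)
    {H K : Subgroup G} (hne : H ≠ K)
    (hb : ∀ L, L ≠ H → MapsTo (comps l) (SectS L) (SectS L) ∧ InjOn (comps l) (SectS L))
    (hinjH : InjOn (comps l) (SectS H))
    (hex : ∃ ω₀ ∈ SectS (A := A) H, comps l ω₀ ∈ SectS (A := A) K ∧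
      ∀ ω ∈ SectS (A := A) H, ω ≠ ω₀ → comps l ω ∈ SectS (A := A) H) :
    ∃ f ∈ l, P1 f H K := by
  induction l with
  | nil =>
    obtain ⟨ω₀, h1, h2, -⟩ := hex
    exact absurd (sectS_disj h1 h2) hne
  | cons f t ih =>
    obtain ⟨ω₀, hω₀, hK, hrest⟩ := hex
    have hf : Mono f := hl f (by simp)
    have ht : ∀ g ∈ t, Mono g := fun g hg => hl g (by simp [hg])
    have hCt : Mono (comps t) := mono_comps ht
    by_cases hT : comps t ω₀ ∈ SectS (A := A) H
    · -- the jump happens at `f`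
      have hmapCt : MapsTo (comps t) (SectS H) (SectS H) := by
        intro ω hω
        by_cases hωeq : ω = ω₀
        · subst hωeq; exact hT
        · exact type_sandwich hf hCt hω (hrest ω hω hωeq)
      have hinjCt : InjOn (comps t) (SectS H) := fun a ha b hb hab =>
        hinjH ha hb (by simp [comps_cons, Function.comp, hab])
      have hbt : BijOn (comps t) (SectS H) (SectS H) := bijOn_sect hmapCt hinjCt
      refine ⟨f, by simp, ?_, ?_, ⟨comps t ω₀, hT, hK, ?_⟩⟩
      · intro L hL
        exact bijOn_of_comps hl (hb L hL).1 (hb L hL).2 f (by simp)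
      · intro a' ha' b' hb' hab
        obtain ⟨a, ha, rfl⟩ := hbt.surjOn ha'
        obtain ⟨b, hb, rfl⟩ := hbt.surjOn hb'
        rw [hinjH ha hb hab]
      · intro ω' hω' hne'
        obtain ⟨ω, hω, rfl⟩ := hbt.surjOn hω'
        have : ω ≠ ω₀ := fun hh => hne' (by rw [hh])
        exact hrest ω hω this
    · -- the jump happened inside `t`
      have hTK : comps t ω₀ ∈ SectS (A := A) K := by
        set T := typeOf (comps t ω₀) with hTdef
        have hTmem : comps t ω₀ ∈ SectS (A := A) T := rfl
        have hTneH : T ≠ H := fun h => hT (by rw [← h] at *; exact hTmem)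
        have hfbij : BijOn f (SectS T) (SectS T) :=
          bijOn_of_comps hl (hb T hTneH).1 (hb T hTneH).2 f (by simp)
        have : f (comps t ω₀) ∈ SectS (A := A) T := hfbij.mapsTo hTmem
        have hTK' : T = K := sectS_disj this hK
        rwa [hTK'] at hTmem
      obtain ⟨g, hg, hP⟩ := ih ht
        (fun L hL => ⟨fun ω hω => type_sandwich hf hCt hω ((hb L hL).1 hω),
          fun a ha b hb' hab => (hb L hL).2 ha hb' (by simp [comps_cons, Function.comp, hab])⟩)
        (fun a ha b hb' hab => hinjH ha hb' (by simp [comps_cons, Function.comp, hab]))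
        ⟨ω₀, hω₀, hTK, fun ω hω hne' => type_sandwich hf hCt hω (hrest ω hω hne')⟩
      exact ⟨g, by simp [hg], hP⟩

theorem exists_P2 {l : List (Orbs G A → Orbs G A)} (hl : ∀ f ∈ l, Mono f)
    {H : Subgroup G}
    (hb : ∀ L, L ≠ H → MapsTo (comps l) (SectS L) (SectS L) ∧ InjOn (comps l) (SectS L))
    (hmapH : MapsTo (comps l) (SectS (A := A) H) (SectS H))
    (hninj : ¬ InjOn (comps l) (SectS (A := A) H)) :
    ∃ f ∈ l, P2 f H := by
  induction l with
  | nil => exact absurd (injOn_id _) hninj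
  | cons f t ih =>
    have hf : Mono f := hl f (by simp)
    have ht : ∀ g ∈ t, Mono g := fun g hg => hl g (by simp [hg])
    have hCt : Mono (comps t) := mono_comps ht
    have hmapCt : MapsTo (comps t) (SectS (A := A) H) (SectS H) := fun ω hω =>
      type_sandwich hf hCt hω (hmapH hω)
    by_cases hinjCt : InjOn (comps t) (SectS (A := A) H)
    · have hbt : BijOn (comps t) (SectS H) (SectS H) := bijOn_sect hmapCt hinjCt
      refine ⟨f, by simp, fun L hL => bijOn_of_comps hl (hb L hL).1 (hb L hL).2 f (by simp), ?_⟩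
      intro hinjf
      apply hninj
      intro a ha b hb' hab
      exact hinjCt ha hb' (hinjf (hmapCt ha) (hmapCt hb') hab)
    · obtain ⟨g, hg, hP⟩ := ih ht
        (fun L hL => ⟨fun ω hω => type_sandwich hf hCt hω ((hb L hL).1 hω),
          fun a ha b hb' hab => (hb L hL).2 ha hb' (by simp [comps_cons, Function.comp, hab])⟩)
        hmapCt hinjCt
      exact ⟨g, by simp [hg], hP⟩

theorem PP_disjoint {f : Orbs G A → Orbs G A} {H K H' K' : Subgroup G}
    (h : PP f H K) (h' : PP f H' K') : H = H' ∧ K = K' := by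
  unfold PP at h h'
  split_ifs at h h' with h1 h2 h2
  · -- both P2
    subst h1; subst h2
    by_cases hHH : H = H'
    · exact ⟨hHH, hHH⟩
    · exact absurd (h'.1 H hHH).injOn h.2
  · -- h : P2 f H (H = K), h' : P1 f H' K'
    subst h1
    by_cases hHH : H' = H
    · subst hHH; exact absurd h'.2.1 h.2
    · obtain ⟨ω₀, hω₀, hK', -⟩ := h'.2.2
      have := (h.1 H' hHH).mapsTo hω₀
      exact absurd (sectS_disj this hK') h2
  · -- h : P1 f H K, h' : P2 f H' (H' = K')
    subst h2
    by_cases hHH : H = H'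
    · subst hHH; exact absurd h.2.1 h'.2
    · obtain ⟨ω₀, hω₀, hK, -⟩ := h.2.2
      have := (h'.1 H hHH).mapsTo hω₀
      exact absurd (sectS_disj this hK) h1
  · -- both P1
    have hHH : H = H' := by
      by_contra hne
      obtain ⟨ω₀, hω₀, hK', -⟩ := h'.2.2
      have := (h.1 H' (Ne.symm hne)).mapsTo hω₀
      exact h2 (sectS_disj this hK')
    subst hHH
    refine ⟨rfl, ?_⟩
    obtain ⟨ω₀, hω₀, hK, hrest⟩ := h.2.2
    obtain ⟨ω₀', hω₀', hK', hrest'⟩ := h'.2.2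
    by_cases hww : ω₀' = ω₀
    · subst hww; exact sectS_disj hK hK'
    · have := hrest ω₀' hω₀' hww
      exact absurd (sectS_disj this hK') h2

omit [Fintype G] [Fintype A] in
theorem PP_not_unit {f : Orbs G A → Orbs G A} (hbij : Function.Bijective f)
    (hpres : ∀ ω, typeOf (f ω) = typeOf ω) (H K : Subgroup G) : ¬ PP f H K := by
  unfold PP
  split_ifs with h1
  · intro h
    exact h.2 (hbij.injective.injOn)
  · rintro ⟨-, -, ω₀, hω₀, hK, -⟩
    have : f ω₀ ∈ SectS (A := A) H := by
      show typeOf (f ω₀) = H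
      rw [hpres]; exact hω₀
    exact h1 (sectS_disj this hK)

end FinOrb
end CAAux
namespace CAAux

open Function Set Finset

attribute [local instance] Classical.propDecidable

variable [Group G]

/-- elementary move on orbits: send `s` to `t`, fix the rest -/
noncomputable def moveMap (s t : Orbs G A) : Orbs G A → Orbs G A := fun ω => if ω = s then t else ω

theorem moveMap_same (s t : Orbs G A) : moveMap s t s = t := if_pos rfl

theorem moveMap_other {s t ω : Orbs G A} (h : ω ≠ s) : moveMap s t ω = ω := if_neg h

theorem mono_moveMap {s t : Orbs G A} (h : typeOf s ≤ typeOf t) : Mono (moveMap s t) := by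
  intro ω
  by_cases hω : ω = s
  · subst hω; rw [moveMap_same]; exact h
  · rw [moveMap_other hω]

section FinOrb
variable [Fintype G] [Fintype A]

/-- weight of a subgroup -/
noncomputable def wt (L : Subgroup G) : ℕ := (L : Set G).ncard

theorem wt_mono {L K : Subgroup G} (h : L ≤ K) : wt L ≤ wt K :=
  Set.ncard_le_ncard h (Set.toFinite _)

theorem wt_strict {L K : Subgroup G} (h : L < K) : wt L < wt K :=
  Set.ncard_lt_ncard (SetLike.coe_ssubset_coe.2 h) (Set.toFinite _)

theorem wt_le_card (L : Subgroup G) : wt L ≤ Fintype.card G := by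
  have := Set.ncard_le_ncard (Set.subset_univ (L : Set G)) (Set.toFinite _)
  rwa [Set.ncard_univ, Nat.card_eq_fintype_card] at this

theorem eq_of_le_wt {L K : Subgroup G} (h : L ≤ K) (h' : wt K ≤ wt L) : L = K := by
  have := Set.eq_of_subset_of_ncard_le (SetLike.coe_subset_coe.2 h) h' (Set.toFinite _)
  exact SetLike.coe_injective this

noncomputable def d1 (F : Orbs G A → Orbs G A) : ℕ :=
  Fintype.card (Orbs G A) - (Finset.image F Finset.univ).card

noncomputable def d2 (F : Orbs G A → Orbs G A) : ℕ :=
  ∑ ω : Orbs G A, wt (typeOf (F ω))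

noncomputable def BIG (G A : Type*) [Group G] [Fintype G] [Fintype A] : ℕ :=
  Fintype.card (Orbs G A) * Fintype.card G + 1

noncomputable def μm (F : Orbs G A → Orbs G A) : ℕ := d1 F * BIG G A + d2 F

theorem d2_lt_BIG (F : Orbs G A → Orbs G A) : d2 F < BIG G A := by
  have : d2 F ≤ Fintype.card (Orbs G A) * Fintype.card G := by
    unfold d2
    calc ∑ ω : Orbs G A, wt (typeOf (F ω)) ≤ ∑ _ω : Orbs G A, Fintype.card G :=
      Finset.sum_le_sum (fun ω _ => wt_le_card _)
    _ = Fintype.card (Orbs G A) * Fintype.card G := by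
      rw [Finset.sum_const, Finset.card_univ, smul_eq_mul]
  exact lt_of_le_of_lt this (Nat.lt_succ_self _)

theorem mu_lt_of_d1 {F F' : Orbs G A → Orbs G A} (h : d1 F' < d1 F) : μm F' < μm F := by
  unfold μm
  calc d1 F' * BIG G A + d2 F' < d1 F' * BIG G A + BIG G A := by
        exact Nat.add_lt_add_left (d2_lt_BIG F') _
  _ = (d1 F' + 1) * BIG G A := by ring
  _ ≤ d1 F * BIG G A := Nat.mul_le_mul_right _ h
  _ ≤ d1 F * BIG G A + d2 F := Nat.le_add_right _ _

theorem mu_lt_of_d2 {F F' : Orbs G A → Orbs G A} (h1 : d1 F' ≤ d1 F) (h2 : d2 F' < d2 F) :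
    μm F' < μm F := by
  unfold μm
  have := Nat.mul_le_mul_right (BIG G A) h1
  omega

theorem pres_of_bij {F : Orbs G A → Orbs G A} (hF : Mono F) (hbij : Function.Bijective F) :
    ∀ ω, typeOf (F ω) = typeOf ω := by
  have hsum : ∑ ω : Orbs G A, wt (typeOf (F ω)) = ∑ ω : Orbs G A, wt (typeOf ω) :=
    hbij.sum_comp (fun ω => wt (typeOf ω))
  have hpt : ∀ ω ∈ Finset.univ, wt (typeOf ω) ≤ wt (typeOf (F ω)) :=
    fun ω _ => wt_mono (hF ω)
  have := (Finset.sum_eq_sum_iff_of_le hpt).1 hsum.symm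
  intro ω
  exact (eq_of_le_wt (hF ω) ((this ω (Finset.mem_univ ω)).ge)).symm

theorem typeOf_swap {a b : Orbs G A} (hab : typeOf a = typeOf b) (ω : Orbs G A) :
    typeOf (Equiv.swap a b ω) = typeOf ω := by
  rw [Equiv.swap_apply_def]
  split_ifs with h1 h2
  · rw [h1, hab]
  · rw [h2, hab]
  · rfl

section Reach
variable {MM : Submonoid (Function.End (G → A))}
variable (hunit : ∀ τ : Function.End (G → A), equivariant τ → Function.Bijective τ → τ ∈ MM)
variable (hmove : ∀ s t : Orbs G A, s ≠ t → typeOf s ≤ typeOf t →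
  (tauF (moveMap s t) : Function.End (G → A)) ∈ MM)

include hunit hmove

theorem mem_of_comp {F F₁ F₂ : Orbs G A → Orbs G A} (h : F = F₁ ∘ F₂)
    (h₁ : Mono F₁) (h₂ : Mono F₂)
    (m₁ : (tauF F₁ : Function.End (G → A)) ∈ MM)
    (m₂ : (tauF F₂ : Function.End (G → A)) ∈ MM) :
    (tauF F : Function.End (G → A)) ∈ MM := by
  subst h
  rw [tauF_comp h₁ h₂]
  exact MM.mul_mem m₁ m₂

/-- one peeling step, assuming the missing orbit's fiber exits -/
theorem step {F : Orbs G A → Orbs G A} (hF : Mono F) {ωs : Orbs G A}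
    (hmiss : ∀ ω, F ω ≠ ωs)
    (hexit : typeOf (F ωs) = typeOf ωs → ∃ ω, ω ≠ ωs ∧ F ω = F ωs) :
    ∃ F', Mono F' ∧ μm F' < μm F ∧
      ((tauF F' : Function.End (G → A)) ∈ MM → (tauF F : Function.End (G → A)) ∈ MM) := by
  by_cases hKM : typeOf (F ωs) = typeOf ωs
  · -- same-type case: redirect a second fiber element
    obtain ⟨ω₁, hne₁, hfib⟩ := hexit hKM
    refine ⟨fun ω => if ω = ω₁ then ωs else F ω, ?_, ?_, ?_⟩
    · intro ω
      by_cases h : ω = ω₁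
      · subst h; simp only [if_pos rfl]
        calc typeOf ω ≤ typeOf (F ω) := hF ω
        _ = typeOf ωs := by rw [hfib, hKM]
      · simpa only [if_neg h] using hF ω
    · apply mu_lt_of_d1
      apply Nat.sub_lt_sub_left
      · -- card Ω bound : image F card < card Ω
        have : ωs ∉ Finset.image F Finset.univ := by
          simp only [Finset.mem_image, not_exists]
          intro ω; intro h; exact hmiss ω h.2
        calc (Finset.image F Finset.univ).card < (insert ωs (Finset.image F Finset.univ)).card := by
              rw [Finset.card_insert_of_notMem this]; omega
        _ ≤ Fintype.card (Orbs G A) := by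
              rw [← Finset.card_univ]; exact Finset.card_le_card (Finset.subset_univ _)
      · -- image grows strictly
        have hsub : insert ωs (Finset.image F Finset.univ) ⊆
            Finset.image (fun ω => if ω = ω₁ then ωs else F ω) Finset.univ := by
          intro x hx
          rcases Finset.mem_insert.1 hx with rfl | hx
          · exact Finset.mem_image.2 ⟨ω₁, Finset.mem_univ _, if_pos rfl⟩
          · obtain ⟨ω, -, rfl⟩ := Finset.mem_image.1 hx
            by_cases h : ω = ω₁
            · subst h
              exact Finset.mem_image.2 ⟨ωs, Finset.mem_univ _,
                by rw [if_neg (Ne.symm hne₁), hfib]⟩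
            · exact Finset.mem_image.2 ⟨ω, Finset.mem_univ _, if_neg h⟩
        have hns : ωs ∉ Finset.image F Finset.univ := by
          simp only [Finset.mem_image, not_exists]
          intro ω h; exact hmiss ω h.2
        calc (Finset.image F Finset.univ).card
            < (insert ωs (Finset.image F Finset.univ)).card := by
              rw [Finset.card_insert_of_notMem hns]; omega
        _ ≤ _ := Finset.card_le_card hsub
    · intro hmem
      refine mem_of_comp hunit hmove (F₁ := fun ω => if ω = ω₁ then ωs else F ω)
        (F₂ := moveMap ω₁ ωs) ?_ ?_ (mono_moveMap ?_) hmem (hmove ω₁ ωs hne₁ ?_)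
      · funext ω
        by_cases h : ω = ω₁
        · subst h
          simp only [Function.comp, moveMap_same, if_neg (Ne.symm hne₁)]
          exact hfib
        · simp only [Function.comp, moveMap_other h, if_neg h]
      · intro ω
        by_cases h : ω = ω₁
        · subst h; simp only [if_pos rfl]
          calc typeOf ω ≤ typeOf (F ω) := hF ω
          _ = typeOf ωs := by rw [hfib, hKM]
        · simpa only [if_neg h] using hF ω
      · calc typeOf ω₁ ≤ typeOf (F ω₁) := hF ω₁
        _ = typeOf ωs := by rw [hfib, hKM]
      · calc typeOf ω₁ ≤ typeOf (F ω₁) := hF ω₁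
        _ = typeOf ωs := by rw [hfib, hKM]
  · -- strict type-increase case: pull the low part of the fiber down to `ωs`
    set ωt := F ωs with hωt
    refine ⟨fun ω => if F ω = ωt ∧ typeOf ω ≤ typeOf ωs then ωs else F ω, ?_, ?_, ?_⟩
    · intro ω
      by_cases h : F ω = ωt ∧ typeOf ω ≤ typeOf ωs
      · simpa only [if_pos h] using h.2
      · simpa only [if_neg h] using hF ω
    · apply mu_lt_of_d2
      · -- d1 does not increase
        apply Nat.sub_le_sub_left
        have hws : ωs ∈ Finset.image (fun ω => if F ω = ωt ∧ typeOf ω ≤ typeOf ωs then ωs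
              else F ω) Finset.univ :=
          Finset.mem_image.2 ⟨ωs, Finset.mem_univ _, if_pos ⟨rfl, le_rfl⟩⟩
        have hsub : Finset.image F Finset.univ ⊆
            insert ωt ((Finset.image (fun ω => if F ω = ωt ∧ typeOf ω ≤ typeOf ωs then ωs
              else F ω) Finset.univ).erase ωs) := by
          intro x hx
          obtain ⟨ω, -, rfl⟩ := Finset.mem_image.1 hx
          by_cases h : F ω = ωt ∧ typeOf ω ≤ typeOf ωs
          · rw [h.1]; exact Finset.mem_insert_self _ _
          · refine Finset.mem_insert_of_mem (Finset.mem_erase.2 ⟨hmiss ω, ?_⟩)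
            exact Finset.mem_image.2 ⟨ω, Finset.mem_univ _, if_neg h⟩
        calc (Finset.image F Finset.univ).card
            ≤ (insert ωt ((Finset.image (fun ω => if F ω = ωt ∧ typeOf ω ≤ typeOf ωs then ωs
              else F ω) Finset.univ).erase ωs)).card := Finset.card_le_card hsub
        _ ≤ ((Finset.image (fun ω => if F ω = ωt ∧ typeOf ω ≤ typeOf ωs then ωs
              else F ω) Finset.univ).erase ωs).card + 1 := Finset.card_insert_le _ _
        _ = (Finset.image (fun ω => if F ω = ωt ∧ typeOf ω ≤ typeOf ωs then ωs
              else F ω) Finset.univ).card := by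
              rw [Finset.card_erase_of_mem hws]
              have : 0 < (Finset.image (fun ω => if F ω = ωt ∧ typeOf ω ≤ typeOf ωs then ωs
                else F ω) Finset.univ).card := Finset.card_pos.2 ⟨ωs, hws⟩
              omega
      · -- d2 strictly decreases
        apply Finset.sum_lt_sum
        · intro ω _
          by_cases h : F ω = ωt ∧ typeOf ω ≤ typeOf ωs
          · simp only [if_pos h]
            apply wt_mono
            calc typeOf ωs ≤ typeOf (F ωs) := hF ωs
            _ = typeOf (F ω) := by rw [h.1]
          · simp only [if_neg h]; exact le_rfl
        · refine ⟨ωs, Finset.mem_univ _, ?_⟩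
          have heq : (fun ω => if F ω = ωt ∧ typeOf ω ≤ typeOf ωs then ωs else F ω) ωs = ωs :=
            if_pos ⟨rfl, le_rfl⟩
          rw [heq]
          exact wt_strict (lt_of_le_of_ne (hF ωs) (fun h => hKM h.symm))
    · intro hmem
      refine mem_of_comp hunit hmove (F₁ := moveMap ωs ωt)
        (F₂ := fun ω => if F ω = ωt ∧ typeOf ω ≤ typeOf ωs then ωs else F ω)
        ?_ (mono_moveMap (hF ωs)) ?_ (hmove ωs ωt (fun h => hmiss ωs h.symm) (hF ωs)) hmem
      · funext ω
        by_cases h : F ω = ωt ∧ typeOf ω ≤ typeOf ωs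
        · simp only [Function.comp, if_pos h, moveMap_same]
          exact h.1
        · simp only [Function.comp, if_neg h, moveMap_other (hmiss ω)]
      · intro ω
        by_cases h : F ω = ωt ∧ typeOf ω ≤ typeOf ωs
        · simpa only [if_pos h] using h.2
        · simpa only [if_neg h] using hF ω

theorem reach_tauF : ∀ F : Orbs G A → Orbs G A, Mono F →
    (tauF F : Function.End (G → A)) ∈ MM := by
  have main : ∀ n, ∀ F : Orbs G A → Orbs G A, Mono F → μm F < n →
      (tauF F : Function.End (G → A)) ∈ MM := by
    intro n
    induction n with
    | zero => intro F _ h; omega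
    | succ n ih =>
      intro F hF hμ
      by_cases hbij : Function.Bijective F
      · exact hunit _ (tauF_equivariant hF) (tauF_bijective hbij (pres_of_bij hF hbij))
      · -- there is a missing orbit
        have hnsurj : ¬ Function.Surjective F := by
          intro hs
          exact hbij ⟨(Finite.injective_iff_surjective).2 hs, hs⟩
        have hexm : ∃ ωs, ∀ ω, F ω ≠ ωs := by
          by_contra h
          push_neg at h
          exact hnsurj fun y => h y
        obtain ⟨ωs, hmiss⟩ := hexm
        have hmiss' : ∀ ω, F ω ≠ ωs := hmiss
        by_cases hchain : typeOf (F ωs) = typeOf ωs ∧ ∀ ω, F ω = F ωs → ω = ωs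
        · -- singleton private same-type fiber: follow the chain and swap
          set c : ℕ → Orbs G A := fun n => F^[n] ωs with hc
          have hc0 : c 0 = ωs := rfl
          have hcs : ∀ n, c (n + 1) = F (c n) := fun n => Function.iterate_succ_apply' F n ωs
          have hEex : ∃ n, typeOf (c (n + 1)) ≠ typeOf ωs ∨
              ∃ ω, ω ≠ c n ∧ F ω = c (n + 1) := by
            by_contra hno
            push_neg at hno
            have hfib : ∀ n ω, F ω = c (n + 1) → ω = c n := by
              intro n ω h
              by_contra hne
              exact (hno n).2 ω hne h
            have aux : ∀ m n, m < n → c m = c n → False := by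
              intro m
              induction m with
              | zero =>
                intro n hn hcn
                obtain ⟨n', rfl⟩ : ∃ n', n = n' + 1 := ⟨n - 1, by omega⟩
                rw [hc0, hcs] at hcn
                exact hmiss' (c n') hcn.symm
              | succ m ihm =>
                intro n hn hcn
                obtain ⟨n', rfl⟩ : ∃ n', n = n' + 1 := ⟨n - 1, by omega⟩
                have h1 : F (c m) = c (n' + 1) := by rw [← hcn, hcs]
                exact ihm n' (by omega) (hfib n' (c m) h1)
            obtain ⟨i, j, hij, hcij⟩ := Finite.exists_ne_map_eq_of_infinite c
            rcases Nat.lt_or_ge i j with h | h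
            · exact aux i j h hcij
            · exact aux j i (by omega) hcij.symm
          set nstar := Nat.find hEex with hnstar
          have hEn := Nat.find_spec hEex
          have hpre : ∀ k, k < nstar → ¬ (typeOf (c (k + 1)) ≠ typeOf ωs ∨
              ∃ ω, ω ≠ c k ∧ F ω = c (k + 1)) := fun k hk => Nat.find_min hEex hk
          have htypes : ∀ k, k ≤ nstar → typeOf (c k) = typeOf ωs := by
            intro k
            induction k with
            | zero => intro _; rw [hc0]
            | succ k ihk =>
              intro hk
              have := hpre k (by omega)
              push_neg at this
              exact this.1
          have hab : typeOf ωs = typeOf (c nstar) := (htypes nstar le_rfl).symm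
          set γ := Equiv.swap ωs (c nstar) with hγ
          have htypeγ : ∀ ω, typeOf (γ ω) = typeOf ω := typeOf_swap hab
          set F2 : Orbs G A → Orbs G A := F ∘ ⇑γ with hF2
          have hF2mono : Mono F2 := by
            intro ω
            calc typeOf ω = typeOf (γ ω) := (htypeγ ω).symm
            _ ≤ typeOf (F (γ ω)) := hF (γ ω)
          have hmiss2 : ∀ ω, F2 ω ≠ ωs := fun ω => hmiss' (γ ω)
          have hF2ωs : F2 ωs = c (nstar + 1) := by
            show F (γ ωs) = c (nstar + 1)
            rw [hγ, Equiv.swap_apply_left, hcs]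
          have hexit2 : typeOf (F2 ωs) = typeOf ωs → ∃ ω, ω ≠ ωs ∧ F2 ω = F2 ωs := by
            intro htp
            rw [hF2ωs] at htp
            rcases hEn with h | ⟨ω, hω, hfω⟩
            · exact absurd htp h
            · refine ⟨γ ω, ?_, ?_⟩
              · intro he
                apply hω
                have : γ (γ ω) = γ ωs := by rw [he]
                rwa [Equiv.swap_apply_self, Equiv.swap_apply_left] at this
              · show F (γ (γ ω)) = F2 ωs
                rw [Equiv.swap_apply_self, hF2ωs, hfω]
          have hμeq : μm F2 = μm F := by
            unfold μm d1 d2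
            congr 1
            · congr 2
              have h1 : Finset.image F2 Finset.univ =
                  Finset.image F (Finset.image (⇑γ) Finset.univ) := by
                rw [Finset.image_image]
              rw [h1, Finset.image_univ_equiv]
            · exact Equiv.sum_comp γ (fun ω => wt (typeOf (F ω)))
          obtain ⟨F', hF', hμ', himp⟩ := step hunit hmove hF2mono hmiss2 hexit2
          have hmem2 : (tauF F2 : Function.End (G → A)) ∈ MM :=
            himp (ih F' hF' (by omega))
          refine mem_of_comp hunit hmove (F₁ := F2) (F₂ := ⇑γ) ?_ hF2mono
            (fun ω => (htypeγ ω).ge) hmem2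
            (hunit _ (tauF_equivariant (fun ω => (htypeγ ω).ge))
              (tauF_bijective γ.bijective htypeγ))
          funext ω
          show F ω = F (γ (γ ω))
          rw [Equiv.swap_apply_self]
        · push_neg at hchain
          obtain ⟨F', hF', hμ', himp⟩ := step hunit hmove hF hmiss'
            (fun hM => by
              obtain ⟨ω, h1, h2⟩ := hchain hM
              exact ⟨ω, h2, h1⟩)
          exact himp (ih F' hF' (by omega))
  intro F hF
  exact main (μm F + 1) F hF (Nat.lt_succ_self _)

end Reach
end FinOrb
end CAAux
namespace CAAux

open Function Set

attribute [local instance] Classical.propDecidable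

variable [Group G]

/-- per-orbit left-translation maps -/
noncomputable def vmap (s : Orbs G A → G) : (G → A) → (G → A) := fun x =>
  shift (repO (mkO x)) (s (mkO x) * (exists_shift_repO x).choose)

section Ded
variable (hded : ∀ H : Subgroup G, H.Normal)
include hded

theorem shift_well {r : G → A} {c c' s : G} (h : shift r c = shift r c') :
    shift r (s * c) = shift r (s * c') := by
  rw [shift_eq_shift_iff] at h ⊢
  have : s * c * (s * c')⁻¹ = s * (c * c'⁻¹) * s⁻¹ := by group
  rw [this]
  exact (hded (stab r)).conj_mem _ h s

theorem vmap_eq_of {s : Orbs G A → G} {x : G → A} {c : G}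
    (hc : shift (repO (mkO x)) c = x) :
    vmap s x = shift (repO (mkO x)) (s (mkO x) * c) := by
  unfold vmap
  exact shift_well hded ((exists_shift_repO x).choose_spec.trans hc.symm)

theorem mkO_vmap (s : Orbs G A → G) (x : G → A) : mkO (vmap s x) = mkO x := by
  unfold vmap
  rw [mkO_shift, mkO_repO]

theorem vmap_equivariant (s : Orbs G A → G) : equivariant (vmap s) := by
  intro x g
  have hc := (exists_shift_repO x).choose_spec
  set c := (exists_shift_repO x).choose
  have hc2 : shift (repO (mkO (shift x g))) (c * g) = shift x g := by
    rw [mkO_shift, ← shift_shift, hc]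
  rw [vmap_eq_of hded hc2, vmap_eq_of hded hc, mkO_shift, ← mul_assoc, ← shift_shift]

theorem vmap_vmap (s s' : Orbs G A → G) (x : G → A) :
    vmap s (vmap s' x) = vmap (fun ω => s ω * s' ω) x := by
  have hc := (exists_shift_repO x).choose_spec
  set c := (exists_shift_repO x).choose
  have h1 : vmap s' x = shift (repO (mkO x)) (s' (mkO x) * c) := vmap_eq_of hded hc
  have h2 : mkO (vmap s' x) = mkO x := mkO_vmap hded s' x
  have hc3 : shift (repO (mkO (vmap s' x))) (s' (mkO x) * c) = vmap s' x := by
    rw [h2, h1]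
  rw [vmap_eq_of hded hc3, h2, vmap_eq_of hded hc, mul_assoc]

theorem vmap_one (x : G → A) : vmap (fun _ => (1 : G)) x = x := by
  have hc := (exists_shift_repO x).choose_spec
  rw [vmap_eq_of hded hc, one_mul, hc]

theorem vmap_bijective (s : Orbs G A → G) : Function.Bijective (vmap s) := by
  have h1 : ∀ x, vmap s (vmap (fun ω => (s ω)⁻¹) x) = x := by
    intro x
    rw [vmap_vmap hded]
    have : (fun ω => s ω * (s ω)⁻¹) = fun _ => (1 : G) := by
      funext ω; rw [mul_inv_cancel]
    rw [this, vmap_one hded]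
  have h2 : ∀ x, vmap (fun ω => (s ω)⁻¹) (vmap s x) = x := by
    intro x
    rw [vmap_vmap hded]
    have : (fun ω => (s ω)⁻¹ * s ω) = fun _ => (1 : G) := by
      funext ω; rw [inv_mul_cancel]
    rw [this, vmap_one hded]
  exact ⟨Function.LeftInverse.injective h2, Function.RightInverse.surjective h1⟩

/-- every equivariant map is the canonical map of its orbit map, post-corrected by a unit -/
theorem sigma_decomp {σ : (G → A) → (G → A)} (hσ : equivariant σ) :
    ∃ s : Orbs G A → G, σ = tauF (Fmap σ hσ) ∘ vmap s := by
  have hFs : ∀ ω : Orbs G A, ∃ g, shift (repO (Fmap σ hσ ω)) g = σ (repO ω) := by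
    intro ω
    have h1 := exists_shift_repO (σ (repO ω))
    have h2 : mkO (σ (repO ω)) = Fmap σ hσ ω := by
      rw [← Fmap_mkO hσ, mkO_repO]
    rwa [h2] at h1
  refine ⟨fun ω => (hFs ω).choose, ?_⟩
  have hmono : Mono (Fmap σ hσ) := Fmap_mono hded hσ
  refine equivariant_ext hσ (equivariant_comp (tauF_equivariant hmono)
    (vmap_equivariant hded _)) (fun ω => ?_)
  have hc : shift (repO (mkO (repO ω))) (1 : G) = repO ω := by rw [mkO_repO, shift_one]
  show σ (repO ω) = tauF (Fmap σ hσ) (vmap _ (repO ω))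
  rw [vmap_eq_of hded hc, mul_one, mkO_repO, tauF_equivariant hmono (repO ω),
    tauF_repO hmono, (hFs ω).choose_spec]

end Ded

/-- proof-free version of the orbit map -/
noncomputable def Fmap' (τ : (G → A) → (G → A)) : Orbs G A → Orbs G A :=
  if h : equivariant τ then Fmap τ h else id

theorem Fmap'_eq {τ : (G → A) → (G → A)} (h : equivariant τ) : Fmap' τ = Fmap τ h :=
  dif_pos h

theorem equivariant_mul {σ τ : Function.End (G → A)} (hσ : equivariant σ) (hτ : equivariant τ) :
    equivariant (σ * τ : Function.End (G → A)) := equivariant_comp hσ hτ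

theorem Fmap'_mul {σ τ : Function.End (G → A)} (hσ : equivariant σ) (hτ : equivariant τ) :
    Fmap' (σ * τ : Function.End (G → A)) = Fmap' σ ∘ Fmap' τ := by
  rw [Fmap'_eq hσ, Fmap'_eq hτ, Fmap'_eq (equivariant_mul hσ hτ)]
  funext ω
  exact Fmap_comp hσ hτ ω

theorem equivariant_one : equivariant (1 : Function.End (G → A)) := equivariant_id

theorem equivariant_prod {l : List (Function.End (G → A))} (hl : ∀ τ ∈ l, equivariant τ) :
    equivariant l.prod := by
  induction l with
  | nil => exact equivariant_one
  | cons f t ih =>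
    rw [List.prod_cons]
    exact equivariant_mul (hl f (by simp)) (ih (fun g hg => hl g (by simp [hg])))

theorem Fmap'_prod {l : List (Function.End (G → A))} (hl : ∀ τ ∈ l, equivariant τ) :
    Fmap' l.prod = comps (l.map Fmap') := by
  induction l with
  | nil =>
    erw [List.prod_nil, List.map_nil, comps_nil, Fmap'_eq equivariant_one]
    funext ω
    induction ω using Quotient.ind with
    | _ x => rfl
  | cons f t ih =>
    erw [List.prod_cons, List.map_cons, comps_cons,
      Fmap'_mul (hl f (by simp)) (equivariant_prod (fun g hg => hl g (by simp [hg]))),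
      ih (fun g hg => hl g (by simp [hg]))]

section FinDed
variable [Fintype G] [Fintype A]
variable (hded : ∀ H : Subgroup G, H.Normal)
include hded

theorem Fmap'_unit {τ : Function.End (G → A)} (hτ : equivariant τ)
    (hbij : Function.Bijective τ) :
    Function.Bijective (Fmap' τ) ∧ ∀ ω, typeOf (Fmap' τ ω) = typeOf ω := by
  rw [Fmap'_eq hτ]
  have hsurj : Function.Surjective (Fmap τ hτ) := by
    intro ω
    induction ω using Quotient.ind with
    | _ x =>
      obtain ⟨y, rfl⟩ := hbij.surjective x
      exact ⟨mkO y, rfl⟩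
  have hbijF : Function.Bijective (Fmap τ hτ) :=
    ⟨(Finite.injective_iff_surjective).2 hsurj, hsurj⟩
  refine ⟨hbijF, fun ω => ?_⟩
  induction ω using Quotient.ind with
  | _ x =>
    show typeOf (Fmap τ hτ (mkO x)) = typeOf (mkO x)
    have h1 : typeOf (Fmap τ hτ (mkO x)) = stab (τ x) := by
      erw [Fmap_mkO, typeOf_mkO hded]
    rw [h1, typeOf_mkO hded]
    refine le_antisymm ?_ (stab_le_equivariant hτ x)
    have hinv := equivariant_inv hτ hbij
    have := stab_le_equivariant hinv (τ x)
    have h2 : (Equiv.ofBijective τ hbij).symm (τ x) = x := by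
      apply hbij.injective
      exact (Equiv.ofBijective τ hbij).apply_symm_apply (τ x)
    rwa [h2] at this

/-- the lower-bound core: any generating set must contain a witness for each move -/
theorem lower_core {V : Finset (Function.End (G → A))}
    (hVeq : ∀ τ ∈ V, equivariant τ)
    {s t : Orbs G A} (hst : s ≠ t) (hle : typeOf s ≤ typeOf t)
    (hgen : (tauF (moveMap s t) : Function.End (G → A)) ∈ Submonoid.closure
      ({τ : Function.End (G → A) | equivariant τ ∧ Function.Bijective τ} ∪ ↑V)) :
    ∃ τ ∈ V, PP (Fmap' τ) (typeOf s) (typeOf t) := by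
  obtain ⟨l, hlmem, hlprod⟩ := Submonoid.exists_list_of_mem_closure (M := Function.End (G → A)) hgen
  have hleq : ∀ τ ∈ l, equivariant τ := by
    intro τ hτ
    rcases hlmem τ hτ with h | h
    · exact h.1
    · exact hVeq τ h
  have hcomps : comps (l.map Fmap') = moveMap s t := by
    rw [← Fmap'_prod hleq, hlprod, Fmap'_eq (tauF_equivariant (mono_moveMap hle)),
      Fmap_tauF (mono_moveMap hle)]
  have hmonol : ∀ f ∈ l.map Fmap', Mono f := by
    intro f hf
    obtain ⟨τ, hτ, rfl⟩ := List.mem_map.1 hf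
    rw [Fmap'_eq (hleq τ hτ)]
    exact Fmap_mono hded (hleq τ hτ)
  have hs : s ∈ SectS (A := A) (typeOf s) := rfl
  have ht : t ∈ SectS (A := A) (typeOf t) := rfl
  have hne : ∀ {L : Subgroup G}, L ≠ typeOf s → ∀ {ω : Orbs G A}, ω ∈ SectS (A := A) L →
      ω ≠ s := by
    intro L hL ω hω h
    exact hL (sectS_disj (h ▸ hω) hs)
  -- sector hypotheses for the move map
  have hb : ∀ L, L ≠ typeOf s → MapsTo (comps (l.map Fmap')) (SectS L) (SectS L) ∧
      InjOn (comps (l.map Fmap')) (SectS L) := by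
    intro L hL
    rw [hcomps]
    constructor
    · intro ω hω
      rwa [moveMap_other (hne hL hω)]
    · intro a ha b hb' hab
      rwa [moveMap_other (hne hL ha), moveMap_other (hne hL hb')] at hab
  have hfind : ∃ f ∈ l.map Fmap', PP f (typeOf s) (typeOf t) := by
    by_cases hHK : typeOf s = typeOf t
    · -- collapse case
      have hP2 : ∃ f ∈ l.map Fmap', P2 f (typeOf s) := by
        apply exists_P2 hmonol hb
        · rw [hcomps]
          intro ω hω
          by_cases h : ω = s
          · subst h; rw [moveMap_same]; rw [← hHK] at ht; exact ht
          · rwa [moveMap_other h]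
        · rw [hcomps]
          intro hinj
          have h1 : moveMap s t s = moveMap s t t := by
            rw [moveMap_same, moveMap_other (Ne.symm hst)]
          exact hst (hinj hs (by rw [← hHK] at ht; exact ht) h1)
      obtain ⟨f, hf, hP⟩ := hP2
      exact ⟨f, hf, by unfold PP; rw [if_pos hHK]; exact hP⟩
    · -- jump case
      have hP1 : ∃ f ∈ l.map Fmap', P1 f (typeOf s) (typeOf t) := by
        apply exists_P1 hmonol hHK hb
        · rw [hcomps]
          intro a ha b hb' hab
          by_cases h1 : a = s <;> by_cases h2 : b = s
          · rw [h1, h2]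
          · subst h1
            rw [moveMap_same, moveMap_other h2] at hab
            exact absurd (sectS_disj ht (hab ▸ hb')) (fun hh => hHK hh.symm)
          · subst h2
            rw [moveMap_same, moveMap_other h1] at hab
            exact absurd (sectS_disj ht (hab.symm ▸ ha)) (fun hh => hHK hh.symm)
          · rwa [moveMap_other h1, moveMap_other h2] at hab
        · refine ⟨s, hs, ?_, ?_⟩
          · rw [hcomps, moveMap_same]; exact ht
          · intro ω hω hωs
            rw [hcomps, moveMap_other hωs]; exact hω
      obtain ⟨f, hf, hP⟩ := hP1
      exact ⟨f, hf, by unfold PP; rw [if_neg hHK]; exact hP⟩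
  obtain ⟨f, hf, hPP⟩ := hfind
  obtain ⟨τ, hτl, rfl⟩ := List.mem_map.1 hf
  rcases hlmem τ hτl with hu | hv
  · exact absurd hPP (PP_not_unit (Fmap'_unit hded hu.1 hu.2).1 (Fmap'_unit hded hu.1 hu.2).2 _ _)
  · exact ⟨τ, hv, hPP⟩

end FinDed
end CAAux
namespace CAAux

open Function Set

attribute [local instance] Classical.propDecidable

theorem exists_third {α : Type*} [Fintype α] (h : 3 ≤ Fintype.card α) (a b : α) :
    ∃ c, c ≠ a ∧ c ≠ b := by
  by_contra hc
  push_neg at hc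
  have hsub : (Finset.univ : Finset α) ⊆ {a, b} := by
    intro v _
    simp only [Finset.mem_insert, Finset.mem_singleton]
    by_cases hv : v = a
    · exact Or.inl hv
    · exact Or.inr (hc v hv)
  have h1 := Finset.card_le_card hsub
  have h2 : ({a, b} : Finset α).card ≤ 2 := by
    refine le_trans (Finset.card_insert_le _ _) ?_
    rw [Finset.card_singleton]
  rw [Finset.card_univ] at h1
  omega

section FreeConfigs
variable {Q : Type*} [Group Q] {A : Type*} [Fintype A] [Fintype Q]

/-- indicator configuration of a finite subset -/
noncomputable def indC (S : Finset Q) (a b : A) : Q → A := fun q => if q ∈ S then a else b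

theorem indC_count (S : Finset Q) {a b : A} (hab : a ≠ b) :
    (Finset.univ.filter (fun q => indC S a b q = a)).card = S.card := by
  congr 1
  ext q
  simp only [Finset.mem_filter, Finset.mem_univ, true_and]
  simp only [indC]
  constructor
  · intro h
    by_contra hq
    rw [if_neg hq] at h
    exact hab h.symm
  · intro h; rw [if_pos h]

theorem count_shift (y : Q → A) (s : Q) (v : A) :
    (Finset.univ.filter (fun q => shift y s q = v)).card =
    (Finset.univ.filter (fun q => y q = v)).card := by
  have h1 : Finset.univ.filter (fun q => shift y s q = v) =
      (Finset.univ.filter (fun q => y q = v)).image (· * s) := by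
    ext q
    simp only [Finset.mem_filter, Finset.mem_univ, true_and, Finset.mem_image]
    simp only [shift]
    constructor
    · intro h
      exact ⟨q * s⁻¹, h, by group⟩
    · rintro ⟨r, hr, rfl⟩
      simpa using hr
  rw [h1, Finset.card_image_of_injective _ (mul_left_injective s)]

theorem ne_of_count {y y' : Q → A} (v : A)
    (h : (Finset.univ.filter (fun q => y q = v)).card ≠
      (Finset.univ.filter (fun q => y' q = v)).card) :
    ∀ s : Q, shift y s ≠ y' := by
  intro s he
  apply h
  rw [← he, count_shift]

theorem stab_indC_one {a b : A} (hab : a ≠ b) :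
    stab (indC ({1} : Finset Q) a b) = ⊥ := by
  ext s
  simp only [Subgroup.mem_bot]
  constructor
  · intro hs
    have h1 := congrFun (mem_stab.1 hs) 1
    simp only [shift, one_mul, indC] at h1
    rw [if_pos (Finset.mem_singleton_self 1)] at h1
    by_contra hne
    rw [if_neg (Finset.notMem_singleton.2 (fun hh => hne (inv_eq_one.1 hh)))] at h1
    exact hab h1.symm
  · rintro rfl
    exact one_mem _

theorem mem_of_stab {y : Q → A} {s : Q} (hs : s ∈ stab y) (q : Q) : y (q * s⁻¹) = y q :=
  congrFun (mem_stab.1 hs) q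

/-- existence of two inequivalent free configurations -/
theorem free_pair (hA : 2 ≤ Fintype.card A) (h : 3 ≤ Fintype.card A ∨ Fintype.card Q ≠ 2) :
    ∃ y y' : Q → A, stab y = ⊥ ∧ stab y' = ⊥ ∧ ∀ s : Q, shift y s ≠ y' := by
  obtain ⟨a, b, hab⟩ := Fintype.exists_pair_of_one_lt_card (α := A) (by omega)
  by_cases hQ1 : Fintype.card Q = 1
  · -- trivial group: constants
    haveI : Subsingleton Q := Fintype.card_le_one_iff_subsingleton.1 (by omega)
    have hbot : ∀ y : Q → A, stab y = ⊥ := by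
      intro y
      ext s
      simp only [Subgroup.mem_bot]
      constructor
      · intro _; exact Subsingleton.elim s 1
      · rintro rfl; exact one_mem _
    refine ⟨fun _ => a, fun _ => b, hbot _, hbot _, ?_⟩
    intro s he
    exact hab (congrFun he 1)
  · have hQpos : 0 < Fintype.card Q := Fintype.card_pos
    obtain ⟨t, ht1⟩ := Fintype.exists_ne_of_one_lt_card (α := Q) (by omega) (1 : Q)
    by_cases hA3 : 3 ≤ Fintype.card A
    · -- three letters
      obtain ⟨c, hca, hcb⟩ := exists_third hA3 a b
      refine ⟨indC {1} a b, indC {1} a c, stab_indC_one hab, stab_indC_one (Ne.symm hca), ?_⟩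
      intro s he
      have hvc := congrFun he (t * s)
      simp only [shift, mul_inv_cancel_right, indC] at hvc
      rw [if_neg (Finset.notMem_singleton.2 ht1)] at hvc
      by_cases hts : t * s = 1
      · rw [if_pos (Finset.mem_singleton.2 hts)] at hvc
        exact hab hvc.symm
      · rw [if_neg (Finset.notMem_singleton.2 hts)] at hvc
        exact hcb hvc.symm
    · -- two letters, card Q ≥ 3
      have hQn2 : Fintype.card Q ≠ 2 := by
        rcases h with h3 | h
        · omega
        · exact h
      have hone : (1 : Q) ∈ ({1} : Finset Q) := Finset.mem_singleton_self 1
      by_cases hsq : ∃ t : Q, t ≠ 1 ∧ t * t ≠ 1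
      · -- an element with t² ≠ 1
        obtain ⟨t, ht, htt⟩ := hsq
        have hstab : stab (indC ({1, t} : Finset Q) a b) = ⊥ := by
          ext s
          simp only [Subgroup.mem_bot]
          constructor
          · intro hs
            have key : ∀ w : Q, w ∈ ({1, t} : Finset Q) → w * s⁻¹ ∈ ({1, t} : Finset Q) := by
              intro w hw
              have h2 := mem_of_stab hs w
              simp only [indC] at h2
              rw [if_pos hw] at h2
              by_contra hmem
              rw [if_neg hmem] at h2
              exact hab h2.symm
            by_contra hne
            have h1 := key 1 (by simp)
            rw [one_mul] at h1
            have hsinv : s⁻¹ = t := by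
              rcases Finset.mem_insert.1 h1 with hh | hh
              · exact absurd (inv_eq_one.1 hh) hne
              · exact Finset.mem_singleton.1 hh
            have h2 := key t (by simp)
            rw [hsinv] at h2
            rcases Finset.mem_insert.1 h2 with hh | hh
            · exact htt hh
            · exact ht (mul_left_cancel ((Finset.mem_singleton.1 hh).trans (mul_one t).symm))
          · rintro rfl; exact one_mem _
        refine ⟨indC {1} a b, indC {1, t} a b, stab_indC_one hab, hstab, ?_⟩
        apply ne_of_count a
        rw [indC_count _ hab, indC_count _ hab, Finset.card_singleton,
          Finset.card_insert_of_notMem (Finset.notMem_singleton.2 (Ne.symm ht)),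
          Finset.card_singleton]
        omega
      · -- elementary abelian 2-group case
        push_neg at hsq
        have hinv : ∀ s : Q, s⁻¹ = s := by
          intro s
          by_cases hs : s = 1
          · rw [hs, inv_one]
          · exact inv_eq_of_mul_eq_one_left (hsq s hs)
        obtain ⟨u, hu1, hut⟩ := exists_third (by omega) (1 : Q) t
        have hmemS : ∀ {v : Q}, v ∈ ({1, t, u} : Finset Q) ↔ v = 1 ∨ v = t ∨ v = u := by
          intro v
          simp [Finset.mem_insert, Finset.mem_singleton]
        have hstab : stab (indC ({1, t, u} : Finset Q) a b) = ⊥ := by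
          ext s
          simp only [Subgroup.mem_bot]
          constructor
          · intro hs
            have key : ∀ w : Q, w ∈ ({1, t, u} : Finset Q) → w * s ∈ ({1, t, u} : Finset Q) := by
              intro w hw
              have h2 := mem_of_stab hs w
              simp only [indC] at h2
              rw [if_pos hw, hinv] at h2
              by_contra hmem
              rw [if_neg hmem] at h2
              exact hab h2.symm
            by_contra hne
            have h1 := key 1 (hmemS.2 (Or.inl rfl))
            rw [one_mul] at h1
            rcases hmemS.1 h1 with hst | hst | hst
            · exact hne hst
            · -- s = t
              have h2 := key u (hmemS.2 (Or.inr (Or.inr rfl)))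
              rcases hmemS.1 h2 with hc | hc | hc
              · -- u * s = 1 : u = s⁻¹ = s = t
                have : u = s := by rw [← hinv s]; exact eq_inv_of_mul_eq_one_left hc
                exact hut (this.trans hst)
              · -- u * s = t = s : u = 1
                rw [← hst] at hc
                exact hu1 (mul_right_cancel (hc.trans (one_mul s).symm))
              · -- u * s = u : s = 1
                exact hne (mul_left_cancel (hc.trans (mul_one u).symm))
            · -- s = u
              have h2 := key t (hmemS.2 (Or.inr (Or.inl rfl)))
              rcases hmemS.1 h2 with hc | hc | hc
              · -- t * s = 1 : t = s = u
                have : t = s := by rw [← hinv s]; exact eq_inv_of_mul_eq_one_left hc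
                exact hut (hst ▸ this).symm
              · -- t * s = t : s = 1
                exact hne (mul_left_cancel (hc.trans (mul_one t).symm))
              · -- t * s = u = s : t = 1
                rw [← hst] at hc
                exact ht1 (mul_right_cancel (hc.trans (one_mul s).symm))
          · rintro rfl; exact one_mem _
        refine ⟨indC {1} a b, indC {1, t, u} a b, stab_indC_one hab, hstab, ?_⟩
        apply ne_of_count a
        have hc3 : ({1, t, u} : Finset Q).card = 3 := by
          rw [Finset.card_insert_of_notMem (by
              simp only [Finset.mem_insert, Finset.mem_singleton]
              push_neg
              exact ⟨Ne.symm ht1, Ne.symm hu1⟩),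
            Finset.card_insert_of_notMem (Finset.notMem_singleton.2 (Ne.symm hut)),
            Finset.card_singleton]
        rw [indC_count _ hab, indC_count _ hab, Finset.card_singleton, hc3]
        omega

/-- in the `|A| = 2`, `|Q| = 2` case every two free configurations are translates -/
theorem free_unique (hA : Fintype.card A = 2) (hQ : Fintype.card Q = 2)
    {y y' : Q → A} (hy : stab y = ⊥) (hy' : stab y' = ⊥) : ∃ s : Q, shift y s = y' := by
  obtain ⟨t, ht1⟩ := Fintype.exists_ne_of_one_lt_card (by omega) (1 : Q)
  have hall : ∀ g : Q, g = 1 ∨ g = t := by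
    intro g
    by_contra hg
    push_neg at hg
    have hcard : ({1, t, g} : Finset Q).card = 3 := by
      rw [Finset.card_insert_of_notMem (by
          simp only [Finset.mem_insert, Finset.mem_singleton]
          push_neg
          exact ⟨Ne.symm ht1, Ne.symm hg.1⟩),
        Finset.card_insert_of_notMem (Finset.notMem_singleton.2 (fun hh => hg.2 hh.symm)),
        Finset.card_singleton]
    have hle := Finset.card_le_card (Finset.subset_univ ({1, t, g} : Finset Q))
    rw [Finset.card_univ, hcard] at hle
    omega
  have htt : t * t = 1 := by
    rcases hall (t * t) with h | h
    · exact h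
    · exact absurd (mul_left_cancel (h.trans (mul_one t).symm)) ht1
  have htinv : t⁻¹ = t := inv_eq_of_mul_eq_one_left htt
  have hnc : ∀ z : Q → A, stab z = ⊥ → z t ≠ z 1 := by
    intro z hz he
    have hmem : t ∈ stab z := by
      rw [mem_stab]
      funext g
      show z (g * t⁻¹) = z g
      rcases hall g with hg | hg <;> rw [hg]
      · rw [one_mul, htinv, he]
      · rw [mul_inv_cancel, he]
    rw [hz, Subgroup.mem_bot] at hmem
    exact ht1 hmem
  have hdich : ∀ v : A, v = y 1 ∨ v = y t := by
    intro v
    by_contra hv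
    push_neg at hv
    have hy1t : y 1 ≠ y t := fun hh => hnc y hy hh.symm
    have hcard : ({y 1, y t, v} : Finset A).card = 3 := by
      rw [Finset.card_insert_of_notMem (by
          simp only [Finset.mem_insert, Finset.mem_singleton]
          push_neg
          exact ⟨hy1t, Ne.symm hv.1⟩),
        Finset.card_insert_of_notMem (Finset.notMem_singleton.2 (fun hh => hv.2 hh.symm)),
        Finset.card_singleton]
    have hle := Finset.card_le_card (Finset.subset_univ ({y 1, y t, v} : Finset A))
    rw [Finset.card_univ, hcard, hA] at hle
    omega
  by_cases h1 : y' 1 = y 1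
  · refine ⟨1, ?_⟩
    rw [shift_one]
    funext g
    rcases hall g with hg | hg <;> rw [hg]
    · exact h1.symm
    · rcases hdich (y' t) with hh | hh
      · exact absurd (hh.trans h1.symm) (hnc y' hy')
      · exact hh.symm
  · refine ⟨t, ?_⟩
    have h1' : y' 1 = y t := (hdich (y' 1)).resolve_left h1
    have h2' : y' t = y 1 := by
      rcases hdich (y' t) with hh | hh
      · exact hh
      · exact absurd (hh.trans h1'.symm) (hnc y' hy')
    funext g
    rcases hall g with hg | hg <;> rw [hg]
    · show y (1 * t⁻¹) = y' 1
      rw [one_mul, htinv, h1']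
    · show y (t * t⁻¹) = y' t
      rw [mul_inv_cancel, h2']

end FreeConfigs
end CAAux
namespace CAAux

open Function

attribute [local instance] Classical.propDecidable

variable [Group G]

section Transfer
variable {H : Subgroup G} [H.Normal] {A : Type*}

theorem shift_comp (y : G ⧸ H → A) (s : G) :
    shift (y ∘ (QuotientGroup.mk : G → G ⧸ H)) s =
      (shift y ((s : G ⧸ H))) ∘ (QuotientGroup.mk : G → G ⧸ H) := by
  funext g
  show y ((↑(g * s⁻¹) : G ⧸ H)) = y ((g : G ⧸ H) * ((s : G ⧸ H))⁻¹)
  rw [QuotientGroup.mk_mul, QuotientGroup.mk_inv]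

theorem comp_mk_inj {y y' : G ⧸ H → A} 
    (h : y ∘ (QuotientGroup.mk : G → G ⧸ H) = y' ∘ (QuotientGroup.mk : G → G ⧸ H)) : y = y' := by
  funext q
  induction q using QuotientGroup.induction_on with
  | H g => exact congrFun h g

theorem stab_comp_iff (y : G ⧸ H → A) (s : G) :
    s ∈ stab (y ∘ (QuotientGroup.mk : G → G ⧸ H)) ↔ ((s : G ⧸ H)) ∈ stab y := by
  rw [mem_stab, mem_stab, shift_comp]
  constructor
  · intro h
    exact comp_mk_inj h
  · intro h
    rw [h]

theorem stab_comp_eq (y : G ⧸ H → A) (hy : stab y = ⊥) :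
    stab (y ∘ (QuotientGroup.mk : G → G ⧸ H)) = H := by
  ext s
  rw [stab_comp_iff, hy, Subgroup.mem_bot, QuotientGroup.eq_one_iff]

theorem exists_factor {x : G → A} (hx : H ≤ stab x) :
    ∃ y : G ⧸ H → A, x = y ∘ (QuotientGroup.mk : G → G ⧸ H) := by
  have hresp : ∀ a b : G, @Setoid.r _ (QuotientGroup.leftRel H) a b → x a = x b := by
    intro a b hab
    rw [QuotientGroup.leftRel_apply] at hab
    have h1 : b = a * (a⁻¹ * b) := by group
    have h2 : (a⁻¹ * b)⁻¹ ∈ stab x := hx (inv_mem hab)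
    have h3 := congrFun (mem_stab.1 h2) a
    simp only [shift, inv_inv] at h3
    rw [h1, ← h3]
  refine ⟨fun q => Quotient.liftOn' q x hresp, ?_⟩
  funext g
  rfl

end Transfer

section Sectors
variable [Fintype G] {A : Type*} [Fintype A]
variable (hded : ∀ H : Subgroup G, H.Normal)
include hded

theorem exists_sect (hq : 2 ≤ Fintype.card A) (H : Subgroup G) :
    ∃ ω : Orbs G A, typeOf ω = H := by
  haveI := hded H
  haveI : Fintype (G ⧸ H) := Fintype.ofFinite _
  obtain ⟨a, b, hab⟩ := Fintype.exists_pair_of_one_lt_card (α := A) (by omega)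
  refine ⟨mkO ((indC ({1} : Finset (G ⧸ H)) a b) ∘ (QuotientGroup.mk : G → G ⧸ H)), ?_⟩
  rw [typeOf_mkO hded, stab_comp_eq _ (stab_indC_one hab)]

theorem card_quot (H : Subgroup G) [Fintype (G ⧸ H)] : Fintype.card (G ⧸ H) = H.index :=
  (Nat.card_eq_fintype_card).symm

theorem exists_two_sect (hq : 2 ≤ Fintype.card A) (H : Subgroup G)
    (h : 3 ≤ Fintype.card A ∨ H.index ≠ 2) :
    ∃ ω₁ ω₂ : Orbs G A, ω₁ ≠ ω₂ ∧ typeOf ω₁ = H ∧ typeOf ω₂ = H := by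
  haveI := hded H
  haveI : Fintype (G ⧸ H) := Fintype.ofFinite _
  have h' : 3 ≤ Fintype.card A ∨ Fintype.card (G ⧸ H) ≠ 2 := by
    rcases h with h | h
    · exact Or.inl h
    · exact Or.inr (by rw [card_quot hded]; exact h)
  obtain ⟨y, y', hy, hy', hyy'⟩ := free_pair hq h'
  refine ⟨mkO (y ∘ (QuotientGroup.mk : G → G ⧸ H)),
    mkO (y' ∘ (QuotientGroup.mk : G → G ⧸ H)), ?_, ?_, ?_⟩
  · intro he
    obtain ⟨s, hs⟩ := mkO_eq_mkO.1 he
    rw [shift_comp] at hs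
    exact hyy' s (comp_mk_inj hs)
  · rw [typeOf_mkO hded, stab_comp_eq _ hy]
  · rw [typeOf_mkO hded, stab_comp_eq _ hy']

theorem sect_subsingleton (hA2 : Fintype.card A = 2) (H : Subgroup G) (hH2 : H.index = 2) :
    ∀ ω₁ ω₂ : Orbs G A, typeOf ω₁ = H → typeOf ω₂ = H → ω₁ = ω₂ := by
  haveI := hded H
  haveI : Fintype (G ⧸ H) := Fintype.ofFinite _
  intro ω₁ ω₂ h₁ h₂
  have hst1 : stab (repO ω₁) = H := h₁
  have hst2 : stab (repO ω₂) = H := h₂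
  obtain ⟨y₁, hy₁⟩ := exists_factor (H := H) hst1.ge
  obtain ⟨y₂, hy₂⟩ := exists_factor (H := H) hst2.ge
  have hb : ∀ (y : G ⧸ H → A), y ∘ (QuotientGroup.mk : G → G ⧸ H) = repO ω₁ ∨
      y ∘ (QuotientGroup.mk : G → G ⧸ H) = repO ω₂ → True := fun _ _ => trivial
  have hfree : ∀ (y : G ⧸ H → A) (ω : Orbs G A), typeOf ω = H →
      y ∘ (QuotientGroup.mk : G → G ⧸ H) = repO ω → stab y = ⊥ := by
    intro y ω hω hy
    ext q
    induction q using QuotientGroup.induction_on with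
    | H s =>
      rw [← stab_comp_iff, hy, Subgroup.mem_bot, QuotientGroup.eq_one_iff]
      show s ∈ typeOf ω ↔ s ∈ H
      rw [hω]
  obtain ⟨sq, hsq⟩ := free_unique hA2 (by rw [card_quot hded]; exact hH2)
    (hfree y₁ ω₁ h₁ hy₁.symm) (hfree y₂ ω₂ h₂ hy₂.symm)
  obtain ⟨s, rfl⟩ := QuotientGroup.mk_surjective sq
  have : shift (repO ω₁) s = repO ω₂ := by
    rw [hy₁, shift_comp, hsq, ← hy₂]
  rw [← mkO_repO ω₁, ← mkO_repO ω₂]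
  exact mkO_eq_mkO.2 ⟨s, this⟩

/-- number of orbits of a given stabilizer type -/
noncomputable def nOrb (A : Type*) [Fintype A] (H : Subgroup G) : ℕ :=
  (Finset.univ.filter (fun ω : Orbs G A => typeOf ω = H)).card

theorem nOrb_pos (hq : 2 ≤ Fintype.card A) (H : Subgroup G) : 1 ≤ nOrb (G := G) A H := by
  obtain ⟨ω, hω⟩ := exists_sect hded hq H
  exact Finset.card_pos.2 ⟨ω, Finset.mem_filter.2 ⟨Finset.mem_univ _, hω⟩⟩

theorem nOrb_two (hq : 2 ≤ Fintype.card A) (H : Subgroup G)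
    (h : 3 ≤ Fintype.card A ∨ H.index ≠ 2) : 2 ≤ nOrb (G := G) A H := by
  obtain ⟨ω₁, ω₂, hne, h₁, h₂⟩ := exists_two_sect hded hq H h
  exact Finset.one_lt_card.2 ⟨ω₁, Finset.mem_filter.2 ⟨Finset.mem_univ _, h₁⟩,
    ω₂, Finset.mem_filter.2 ⟨Finset.mem_univ _, h₂⟩, hne⟩

theorem nOrb_one (hA2 : Fintype.card A = 2) (H : Subgroup G) (hH2 : H.index = 2) :
    nOrb (G := G) A H = 1 := by
  refine le_antisymm ?_ (nOrb_pos hded (by omega) H)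
  apply Finset.card_le_one.2
  intro ω₁ h₁ ω₂ h₂
  exact sect_subsingleton hded hA2 H hH2 ω₁ ω₂ (Finset.mem_filter.1 h₁).2
    (Finset.mem_filter.1 h₂).2

theorem nOrb_eq_one_iff (hq : 2 ≤ Fintype.card A) (H : Subgroup G) :
    nOrb (G := G) A H = 1 ↔ (Fintype.card A = 2 ∧ H.index = 2) := by
  constructor
  · intro h1
    by_contra hc
    have : 3 ≤ Fintype.card A ∨ H.index ≠ 2 := by
      rcases Classical.em (Fintype.card A = 2) with h | h
      · exact Or.inr (fun hh => hc ⟨h, hh⟩)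
      · exact Or.inl (by omega)
    have := nOrb_two hded hq H this
    omega
  · rintro ⟨h1, h2⟩
    exact nOrb_one hded h1 H h2

end Sectors
end CAAux
namespace CAAux

open Function

attribute [local instance] Classical.propDecidable

variable [Group G]

noncomputable instance [Fintype G] : Fintype (Subgroup G) := by
  have : Finite (Subgroup G) := Finite.of_injective (fun H => (H : Set G)) SetLike.coe_injective
  exact Fintype.ofFinite _

theorem natCard_subtype {α : Type*} [Fintype α] (p : α → Prop) :
    Nat.card {x // p x} = (Finset.univ.filter p).card := by
  rw [Nat.card_eq_fintype_card, Fintype.card_subtype]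

section Assemble
variable {A : Type*} [Fintype G] [Fintype A]
variable (hded : ∀ H : Subgroup G, H.Normal) (hq : 2 ≤ Fintype.card A)

/-- the finset of required pairs -/
noncomputable def reqPairs (G A : Type*) [Group G] [Fintype G] [Fintype A] :
    Finset (Subgroup G × Subgroup G) :=
  Finset.univ.filter (fun p => p.1 ≤ p.2 ∧ (p.1 = p.2 → 2 ≤ nOrb (G := G) A p.1))

include hded hq

theorem reqPairs_card :
    (reqPairs G A).card = (if Fintype.card A = 2 then
        Nat.card {p : Subgroup G × Subgroup G // p.1 ≤ p.2} -
          Nat.card {H : Subgroup G // H.index = 2}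
      else
        Nat.card {p : Subgroup G × Subgroup G // p.1 ≤ p.2}) := by
  classical
  set AA := Finset.univ.filter (fun p : Subgroup G × Subgroup G => p.1 ≤ p.2) with hAA
  set BB := Finset.univ.filter
    (fun p : Subgroup G × Subgroup G => p.1 ≤ p.2 ∧ p.1 = p.2 ∧ nOrb (G := G) A p.1 = 1) with hBB
  have hBsub : BB ⊆ AA := by
    intro p hp
    rw [hBB, Finset.mem_filter] at hp
    rw [hAA, Finset.mem_filter]
    exact ⟨hp.1, hp.2.1⟩
  have hR : reqPairs G A = AA \ BB := by
    ext p
    rw [reqPairs, Finset.mem_filter, Finset.mem_sdiff, hAA, hBB, Finset.mem_filter,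
      Finset.mem_filter]
    constructor
    · rintro ⟨hu, hle, him⟩
      refine ⟨⟨hu, hle⟩, ?_⟩
      rintro ⟨-, -, heq, hone⟩
      have := him heq
      omega
    · rintro ⟨⟨hu, hle⟩, hnb⟩
      refine ⟨hu, hle, ?_⟩
      intro heq
      have h1 := nOrb_pos (G := G) (A := A) hded hq p.1
      by_contra hlt
      exact hnb ⟨hu, hle, heq, by omega⟩
  have hBimage : BB = (Finset.univ.filter
      (fun H : Subgroup G => nOrb (G := G) A H = 1)).image (fun H => (H, H)) := by
    ext p
    rw [hBB, Finset.mem_filter, Finset.mem_image]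
    constructor
    · rintro ⟨-, -, heq, hone⟩
      exact ⟨p.1, Finset.mem_filter.2 ⟨Finset.mem_univ _, hone⟩, by
        rw [Prod.ext_iff]; exact ⟨rfl, heq⟩⟩
    · rintro ⟨H, hH, rfl⟩
      exact ⟨Finset.mem_univ _, le_rfl, rfl, (Finset.mem_filter.1 hH).2⟩
  have hBcard : BB.card = (Finset.univ.filter
      (fun H : Subgroup G => nOrb (G := G) A H = 1)).card := by
    rw [hBimage]
    exact Finset.card_image_of_injective _ (fun a b hab => (Prod.ext_iff.1 hab).1)
  have hAcard : AA.card = Nat.card {p : Subgroup G × Subgroup G // p.1 ≤ p.2} := by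
    rw [natCard_subtype]
  rw [hR, Finset.card_sdiff_of_subset hBsub, hAcard, hBcard]
  by_cases hA2 : Fintype.card A = 2
  · rw [if_pos hA2]
    congr 1
    rw [natCard_subtype]
    congr 1
    ext H
    simp only [Finset.mem_filter, Finset.mem_univ, true_and]
    rw [nOrb_eq_one_iff hded hq H]
    simp [hA2]
  · rw [if_neg hA2]
    have : Finset.univ.filter (fun H : Subgroup G => nOrb (G := G) A H = 1) = ∅ := by
      apply Finset.filter_false_of_mem
      intro H _
      rw [nOrb_eq_one_iff hded hq H]
      rintro ⟨h1, -⟩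
      exact hA2 h1
    rw [this, Finset.card_empty, Nat.sub_zero]

/-- witnesses for a required pair -/
theorem reqPairs_witness {p : Subgroup G × Subgroup G} (hp : p ∈ reqPairs G A) :
    ∃ st : Orbs G A × Orbs G A, st.1 ≠ st.2 ∧ typeOf st.1 = p.1 ∧ typeOf st.2 = p.2 := by
  rw [reqPairs, Finset.mem_filter] at hp
  obtain ⟨-, hle, him⟩ := hp
  by_cases heq : p.1 = p.2
  · have h2 := him heq
    obtain ⟨ω₁, hω₁, ω₂, hω₂, hne⟩ := Finset.one_lt_card.1 h2
    rw [Finset.mem_filter] at hω₁ hω₂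
    exact ⟨(ω₁, ω₂), hne, hω₁.2, hω₂.2.trans heq⟩
  · obtain ⟨ω₁, hω₁⟩ := exists_sect (A := A) hded hq p.1
    obtain ⟨ω₂, hω₂⟩ := exists_sect (A := A) hded hq p.2
    refine ⟨(ω₁, ω₂), ?_, hω₁, hω₂⟩
    intro he
    apply heq
    rw [← hω₁, ← hω₂]
    exact congrArg typeOf he

omit hded hq in
/-- conjugating a move to prescribed source and target -/
theorem move_conj {s t s₀ t₀ : Orbs G A} (hst : s ≠ t) (hst₀ : s₀ ≠ t₀)
    (hs : typeOf s₀ = typeOf s) (ht : typeOf t₀ = typeOf t) :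
    ∃ π : Equiv.Perm (Orbs G A), (∀ ω, typeOf (π ω) = typeOf ω) ∧
      moveMap s t = ⇑π ∘ moveMap s₀ t₀ ∘ ⇑π.symm := by
  classical
  have hπ₁pres : ∀ ω, typeOf (Equiv.swap s₀ s ω) = typeOf ω := typeOf_swap hs
  have ht₁t : typeOf (Equiv.swap s₀ s t₀) = typeOf t := by rw [hπ₁pres, ht]
  have hπ₂pres : ∀ ω, typeOf (Equiv.swap (Equiv.swap s₀ s t₀) t ω) = typeOf ω :=
    typeOf_swap ht₁t
  set π : Equiv.Perm (Orbs G A) :=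
    (Equiv.swap s₀ s).trans (Equiv.swap (Equiv.swap s₀ s t₀) t) with hπdef
  have hπpres : ∀ ω, typeOf (π ω) = typeOf ω := by
    intro ω
    show typeOf (Equiv.swap (Equiv.swap s₀ s t₀) t (Equiv.swap s₀ s ω)) = typeOf ω
    rw [hπ₂pres, hπ₁pres]
  have hπs₀ : π s₀ = s := by
    show Equiv.swap (Equiv.swap s₀ s t₀) t (Equiv.swap s₀ s s₀) = s
    rw [Equiv.swap_apply_left]
    have h2 : s ≠ Equiv.swap s₀ s t₀ := by
      intro he
      apply hst₀
      apply (Equiv.swap s₀ s).injective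
      rw [← he, Equiv.swap_apply_left]
    exact Equiv.swap_apply_of_ne_of_ne h2 hst
  have hπt₀ : π t₀ = t := by
    show Equiv.swap (Equiv.swap s₀ s t₀) t (Equiv.swap s₀ s t₀) = t
    exact Equiv.swap_apply_left _ _
  refine ⟨π, hπpres, ?_⟩
  funext ω
  by_cases hω : ω = s
  · subst hω
    have h1 : π.symm ω = s₀ := by
      rw [← hπs₀, Equiv.symm_apply_apply]
    simp only [Function.comp]
    rw [h1, moveMap_same, moveMap_same, hπt₀]
  · have h1 : π.symm ω ≠ s₀ := by
      intro he
      apply hω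
      rw [← hπs₀, ← he, Equiv.apply_symm_apply]
    simp only [Function.comp]
    rw [moveMap_other hω, moveMap_other h1, Equiv.apply_symm_apply]

end Assemble
end CAAux
namespace CAAux

open Function

attribute [local instance] Classical.propDecidable

variable [Group G]

theorem moveMap_inj {s t s' t' : Orbs G A} (hst : s ≠ t) (hst' : s' ≠ t')
    (h : moveMap s t = moveMap s' t') : s = s' ∧ t = t' := by
  have h1 := congrFun h s'
  rw [moveMap_same] at h1
  by_cases hss : s' = s
  · subst hss
    rw [moveMap_same] at h1
    exact ⟨rfl, h1⟩
  · rw [moveMap_other hss] at h1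
    exact absurd h1 hst'

theorem Fmap'_tauF {F : Orbs G A → Orbs G A} (hF : Mono F) : Fmap' (tauF F) = F := by
  rw [Fmap'_eq (tauF_equivariant hF), Fmap_tauF hF]

theorem mem_reqPairs [Fintype G] {A : Type*} [Fintype A] {p : Subgroup G × Subgroup G} :
    p ∈ reqPairs G A ↔ p.1 ≤ p.2 ∧ (p.1 = p.2 → 2 ≤ nOrb (G := G) A p.1) := by
  rw [reqPairs, Finset.mem_filter]
  simp only [Finset.mem_univ, true_and]

end CAAux

open CAAux

/-- relative rank of `ICA(G;A)` in `CA(G;A)`: for a finite Dedekind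
group `G` and `|A| = q ≥ 2`, the least cardinality of a set `V` of `G`-equivariant
transformations such that the bijective `G`-equivariant transformations together with
`V` generate (under composition) the monoid of all `G`-equivariant transformations is
`E − I₂` if `q = 2` and `E` if `q ≥ 3`, where `E` is the number of pairs `(H,K)` of
subgroups of `G` with `H ≤ K` and `I₂` is the number of subgroups of index `2`. -/
theorem relative_rank_ICA [Group G] [Fintype G] [Fintype A]
    (hded : ∀ H : Subgroup G, H.Normal) (hq : 2 ≤ Fintype.card A) :
    IsLeast
      {k : ℕ | ∃ V : Finset (Function.End (G → A)),
        V.card = k ∧ (∀ τ ∈ V, equivariant τ) ∧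
        ∀ σ : Function.End (G → A), equivariant σ →
          σ ∈ Submonoid.closure
            ({τ : Function.End (G → A) | equivariant τ ∧ Function.Bijective τ} ∪ ↑V)}
      (if Fintype.card A = 2 then
        Nat.card {p : Subgroup G × Subgroup G // p.1 ≤ p.2} -
          Nat.card {H : Subgroup G // H.index = 2}
      else
        Nat.card {p : Subgroup G × Subgroup G // p.1 ≤ p.2}) := by

  classical
  rw [← reqPairs_card (A := A) hded hq]
  have hNA : Nonempty A := by
    have : 0 < Fintype.card A := by omega
    exact Fintype.card_pos_iff.1 this
  haveI := hNA
  haveI : Nonempty (Orbs G A) := ⟨mkO (fun _ => Classical.arbitrary A)⟩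
  constructor
  · -- the required pairs give a generating set of the right size
    have hD : ∀ p ∈ reqPairs G A,
        ∃ st : Orbs G A × Orbs G A, st.1 ≠ st.2 ∧ typeOf st.1 = p.1 ∧ typeOf st.2 = p.2 :=
      fun p hp => reqPairs_witness hded hq hp
    set D : Subgroup G × Subgroup G → Orbs G A × Orbs G A := fun p =>
      if h : ∃ st : Orbs G A × Orbs G A, st.1 ≠ st.2 ∧ typeOf st.1 = p.1 ∧ typeOf st.2 = p.2
      then h.choose else Classical.arbitrary _ with hDdef
    have hDspec : ∀ p ∈ reqPairs G A,
        (D p).1 ≠ (D p).2 ∧ typeOf (D p).1 = p.1 ∧ typeOf (D p).2 = p.2 := by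
      intro p hp
      have h := hD p hp
      rw [hDdef]
      simp only [dif_pos h]
      exact h.choose_spec
    set gen : Subgroup G × Subgroup G → Function.End (G → A) := fun p =>
      (tauF (moveMap (D p).1 (D p).2) : Function.End (G → A)) with hgendef
    have hmonogen : ∀ p ∈ reqPairs G A, Mono (moveMap (D p).1 (D p).2) := by
      intro p hp
      apply mono_moveMap
      rw [(hDspec p hp).2.1, (hDspec p hp).2.2]
      exact (mem_reqPairs.1 hp).1
    refine ⟨(reqPairs G A).image gen, ?_, ?_, ?_⟩
    · -- cardinality
      apply Finset.card_image_of_injOn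
      intro p hp p' hp' he
      have h1 : moveMap (D p).1 (D p).2 = moveMap (D p').1 (D p').2 := by
        have := congrArg Fmap' he
        rwa [hgendef, Fmap'_tauF (hmonogen p hp), Fmap'_tauF (hmonogen p' hp')] at this
      obtain ⟨hs, ht⟩ := moveMap_inj (hDspec p hp).1 (hDspec p' hp').1 h1
      have e1 : p.1 = p'.1 := by
        rw [← (hDspec p hp).2.1, ← (hDspec p' hp').2.1, hs]
      have e2 : p.2 = p'.2 := by
        rw [← (hDspec p hp).2.2, ← (hDspec p' hp').2.2, ht]
      exact Prod.ext e1 e2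
    · -- equivariance
      intro τ hτ
      obtain ⟨p, hp, rfl⟩ := Finset.mem_image.1 hτ
      exact tauF_equivariant (hmonogen p hp)
    · -- generation
      intro σ hσ
      set MM := Submonoid.closure
        ({τ : Function.End (G → A) | equivariant τ ∧ Function.Bijective τ} ∪
          ↑((reqPairs G A).image gen)) with hMM
      have hunit : ∀ τ : Function.End (G → A), equivariant τ → Function.Bijective τ →
          τ ∈ MM := fun τ h1 h2 => Submonoid.subset_closure (Or.inl ⟨h1, h2⟩)
      have hmove : ∀ s t : Orbs G A, s ≠ t → typeOf s ≤ typeOf t →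
          (tauF (moveMap s t) : Function.End (G → A)) ∈ MM := by
        intro s t hst hle
        set p : Subgroup G × Subgroup G := (typeOf s, typeOf t) with hpdef
        have hp : p ∈ reqPairs G A := by
          rw [mem_reqPairs]
          refine ⟨hle, ?_⟩
          intro heq
          apply Finset.one_lt_card.2
          refine ⟨s, Finset.mem_filter.2 ⟨Finset.mem_univ _, rfl⟩,
            t, Finset.mem_filter.2 ⟨Finset.mem_univ _, heq.symm⟩, hst⟩
        have hgenmem : gen p ∈ MM := by
          apply Submonoid.subset_closure
          exact Or.inr (Finset.mem_coe.2 (Finset.mem_image_of_mem gen hp))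
        obtain ⟨π, hπpres, hconj⟩ := move_conj hst (hDspec p hp).1
          ((hDspec p hp).2.1 : typeOf (D p).1 = typeOf s)
          ((hDspec p hp).2.2 : typeOf (D p).2 = typeOf t)
        have hπmono : Mono (⇑π) := fun ω => (hπpres ω).ge
        have hπsymmpres : ∀ ω, typeOf (π.symm ω) = typeOf ω := by
          intro ω
          have h0 := hπpres (π.symm ω)
          rw [Equiv.apply_symm_apply] at h0
          exact h0.symm
        have hπsymmmono : Mono (⇑π.symm) := fun ω => (hπsymmpres ω).ge
        have hmonomid : Mono (moveMap (D p).1 (D p).2 ∘ ⇑π.symm) :=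
          mono_comp (hmonogen p hp) hπsymmmono
        rw [hconj, tauF_comp hπmono hmonomid, tauF_comp (hmonogen p hp) hπsymmmono]
        refine MM.mul_mem (hunit _ (tauF_equivariant hπmono)
          (tauF_bijective π.bijective hπpres)) (MM.mul_mem hgenmem
          (hunit _ (tauF_equivariant hπsymmmono)
            (tauF_bijective π.symm.bijective hπsymmpres)))
      obtain ⟨sfam, hdec⟩ := sigma_decomp hded hσ
      rw [hdec]
      exact MM.mul_mem (reach_tauF hunit hmove _ (Fmap_mono hded hσ))
        (hunit _ (vmap_equivariant hded _) (vmap_bijective hded _))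
  · -- lower bound
    rintro k ⟨V', hcard, hVeq, hgen'⟩
    rw [← hcard]
    set f : Subgroup G × Subgroup G → Function.End (G → A) := fun p =>
      if h : ∃ τ ∈ V', PP (Fmap' τ) p.1 p.2 then h.choose else 1 with hfdef
    have hPPf : ∀ p ∈ reqPairs G A, f p ∈ V' ∧ PP (Fmap' (f p)) p.1 p.2 := by
      intro p hp
      have hex : ∃ τ ∈ V', PP (Fmap' τ) p.1 p.2 := by
        obtain ⟨st, hne, h1, h2⟩ := reqPairs_witness hded hq hp
        have hle : typeOf st.1 ≤ typeOf st.2 := by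
          rw [h1, h2]
          exact (mem_reqPairs.1 hp).1
        have := lower_core hded hVeq hne hle
          (hgen' _ (tauF_equivariant (mono_moveMap hle)))
        rwa [h1, h2] at this
      rw [hfdef]
      simp only [dif_pos hex]
      obtain ⟨hmem, hPP⟩ := hex.choose_spec
      exact ⟨hmem, hPP⟩
    apply Finset.card_le_card_of_injOn f
    · intro p hp
      exact (hPPf p hp).1
    · intro p hp p' hp' he
      have h1 := (hPPf p hp).2
      have h2 := (hPPf p' hp').2
      rw [he] at h1
      obtain ⟨e1, e2⟩ := PP_disjoint h1 h2
      exact Prod.ext e1 e2
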